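/- arXiv:2410.05880 — 3 statements merged into one kernel-verified Lean document; each statement's English description precedes it below -/
import Mathlib

section
/- Let g = ∇h_α(x) be the minimum-norm element of the Goldstein α-subdifferential ∂_α h(x) of an L-Lipschitz function h, and suppose ‖g‖ ≠ 0. Then h(x − (α/‖g‖)·g) ≤ h(x) − α‖g‖ (Goldstein's descent property). -/
open MeasureTheory Filter Topology Set RealInnerProductSpace

lemma key1D (f : ℝ → ℝ) (K : NNReal) (hf : LipschitzWith K f) (c : ℝ) (a b : ℝ) (hab : a ≤ b)
    (s : Set ℝ) (hs : volume s = 0)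
    (hder : ∀ t ∈ Icc a b, t ∉ s → ∃ f', HasDerivAt f f' t ∧ f' ≤ c) :
    f b - f a ≤ c * (b - a) := by
  set M : ℝ := K + |c| + 1 with hM
  have hM1 : (1:ℝ) ≤ M := le_add_of_nonneg_left (by positivity)
  have hM0 : (0:ℝ) < M := by linarith
  -- reduce to: ∀ ε > 0, f b - f a ≤ c * (b-a) + M * ε
  have main : ∀ ε : ℝ, 0 < ε → f b - f a ≤ c * (b - a) + M * ε := by
    intro ε hε
    -- open cover of the null set
    obtain ⟨U, hsU, hUopen, hUvol⟩ :
        ∃ U ⊇ s, IsOpen U ∧ volume U < ENNReal.ofReal ε := by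
      apply Set.exists_isOpen_lt_of_lt
      rw [hs]; exact ENNReal.ofReal_pos.2 hε
    have hUne : volume U ≠ ⊤ := hUvol.ne_top
    set g : ℝ → ℝ := fun t => (volume (U ∩ Ioc a t)).toReal with hg
    have hgmono : Monotone g := by
      intro t z htz
      apply ENNReal.toReal_mono (ne_top_of_le_ne_top hUne (measure_mono inter_subset_left))
      exact measure_mono (inter_subset_inter_right _ (Ioc_subset_Ioc le_rfl htz))
    have hga : g a = 0 := by simp [hg]
    have hglip : LipschitzWith 1 g := by
      apply LipschitzWith.of_dist_le_mul
      intro t z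
      wlog hzt : z ≤ t generalizing t z
      · rw [dist_comm, dist_comm t z]; exact this z t (le_of_not_ge hzt)
      rw [Real.dist_eq, Real.dist_eq, abs_of_nonneg (sub_nonneg.2 (hgmono hzt)),
        abs_of_nonneg (sub_nonneg.2 hzt), NNReal.coe_one, one_mul]
      have h1 : volume (U ∩ Ioc a t) ≤ volume (U ∩ Ioc a z) + volume (Ioc z t) := by
        refine le_trans (measure_mono ?_) (measure_union_le _ _)
        intro y ⟨hyU, hyI⟩
        rcases le_or_gt y z with hyz | hyz
        · exact Or.inl ⟨hyU, hyI.1, hyz⟩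
        · exact Or.inr ⟨hyz, hyI.2⟩
      have h2 := ENNReal.toReal_mono (by
          refine ENNReal.add_ne_top.2 ⟨ne_top_of_le_ne_top hUne (measure_mono inter_subset_left), ?_⟩
          simp [Real.volume_Ioc]) h1
      rw [ENNReal.toReal_add (ne_top_of_le_ne_top hUne (measure_mono inter_subset_left))
        (by simp [Real.volume_Ioc]), Real.volume_Ioc, ENNReal.toReal_ofReal_eq_iff.2] at h2
      · linarith [h2]
      · linarith
    -- additivity of g on ordered points
    have hgadd : ∀ t z : ℝ, a ≤ t → t ≤ z →
        g z - g t = (volume (U ∩ Ioc t z)).toReal := by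
      intro t z hat htz
      have hsplit : U ∩ Ioc a z = (U ∩ Ioc a t) ∪ (U ∩ Ioc t z) := by
        rw [← inter_union_distrib_left, Ioc_union_Ioc_eq_Ioc hat htz]
      have hdisj : Disjoint (U ∩ Ioc a t) (U ∩ Ioc t z) := by
        apply Disjoint.inter_left' ; apply Disjoint.inter_right'
        exact Ioc_disjoint_Ioc.2 (by simp)
      have := measure_union (μ := volume) hdisj (hUopen.measurableSet.inter measurableSet_Ioc)
      rw [← hsplit] at this
      simp only [hg]
      rw [this, ENNReal.toReal_add (ne_top_of_le_ne_top hUne (measure_mono inter_subset_left))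
        (ne_top_of_le_ne_top hUne (measure_mono inter_subset_left))]
      ring
    set F : ℝ → ℝ := fun t => f t - M * g t with hF
    have hFcont : ContinuousOn F (Icc a b) :=
      (hf.continuous.continuousOn).sub ((continuous_const.mul hglip.continuous).continuousOn)
    have key : ∀ y ∈ Icc a b, F y ≤ f a + c * (y - a) := by
      apply image_le_of_liminf_slope_right_le_deriv_boundary (B' := fun _ => c) hFcont
      · simp [hF, hga]
      · exact (continuousOn_const.add (continuousOn_const.mul
          ((continuousOn_id).sub continuousOn_const)))
      · intro y _
        simpa using (((hasDerivWithinAt_id y (Ici y)).sub_const a).const_mul c).const_add (f a)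
      · intro t ht r hr
        by_cases hts : t ∈ s
        · -- t is in the open set U : slope of g is 1 near t
          have htU : t ∈ U := hsU hts
          obtain ⟨δ, hδ, hball⟩ := Metric.isOpen_iff.1 hUopen t htU
          have hev : ∀ᶠ z in 𝓝[>] t, slope F t z < r := by
            filter_upwards [Ioo_mem_nhdsGT_of_mem (Set.left_mem_Ico.2
              (show t < t + δ by linarith))] with z hz
            have htz : t < z := hz.1
            have hIocU : Ioc t z ⊆ U := by
              intro y hy
              apply hball
              rw [Metric.mem_ball, Real.dist_eq, abs_of_pos (by linarith [hy.1])]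
              linarith [hy.2, hz.2]
            have hgz : g z - g t = z - t := by
              rw [hgadd t z ht.1 htz.le, inter_eq_right.2 hIocU, Real.volume_Ioc,
                ENNReal.toReal_ofReal (by linarith)]
            have hfz : f z - f t ≤ K * (z - t) := by
              have := hf.dist_le_mul z t
              rw [Real.dist_eq, Real.dist_eq, abs_of_pos (sub_pos.2 htz)] at this
              calc f z - f t ≤ |f z - f t| := le_abs_self _
                _ ≤ K * (z - t) := this
            have : slope F t z = (f z - f t) / (z - t) - M * ((g z - g t) / (z - t)) := by
              simp only [slope_def_field, hF]
              field_simp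
              ring
            rw [this, hgz, div_self (by linarith)]
            have h1 : (f z - f t) / (z - t) ≤ K := by
              rw [div_le_iff₀ (by linarith)]; linarith
            have : (K:ℝ) - M ≤ c := by
              simp only [hM]
              have := abs_nonneg c
              have := neg_abs_le c
              linarith
            linarith
          exact hev.frequently
        · -- t is a point of differentiability
          obtain ⟨f', hf', hf'c⟩ := hder t (Ico_subset_Icc_self ht) hts
          have hslope : Tendsto (slope f t) (𝓝[>] t) (𝓝 f') :=
            ((hasDerivAt_iff_tendsto_slope.1 hf').mono_left
              (nhdsWithin_mono t (fun z hz => ne_of_gt hz)))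
          have hev : ∀ᶠ z in 𝓝[>] t, slope F t z < r := by
            filter_upwards [hslope (Iio_mem_nhds (lt_of_le_of_lt hf'c hr)),
              self_mem_nhdsWithin] with z hz1 (hz2 : t < z)
            have hgge : 0 ≤ (g z - g t) / (z - t) :=
              div_nonneg (sub_nonneg.2 (hgmono hz2.le)) (by linarith)
            have : slope F t z = (f z - f t) / (z - t) - M * ((g z - g t) / (z - t)) := by
              simp only [slope_def_field, hF]
              field_simp
              ring
            rw [this]
            have : (f z - f t) / (z - t) < r := by
              simpa [slope_def_field] using hz1
            nlinarith [mul_nonneg hM0.le hgge]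
          exact hev.frequently
    have hkb := key b (Set.right_mem_Icc.2 hab)
    have hgb : g b ≤ ε := by
      have h1 : volume (U ∩ Ioc a b) ≤ volume U := measure_mono inter_subset_left
      have := ENNReal.toReal_mono hUne h1
      have h2 : (volume U).toReal ≤ ε :=
        le_of_lt (ENNReal.lt_ofReal_iff_toReal_lt hUne |>.1 hUvol)
      simp only [hg]
      linarith
    have : f b - M * g b ≤ f a + c * (b - a) := hkb
    nlinarith [hgmono (le_refl b), mul_le_mul_of_nonneg_left hgb hM0.le]
  by_contra hcon
  push_neg at hcon
  have hgap : 0 < f b - f a - c * (b - a) := by linarith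
  have hε2 : 0 < (f b - f a - c * (b - a)) / (2 * M) := by positivity
  have hmn := main _ hε2
  have hMe : M * ((f b - f a - c * (b - a)) / (2 * M)) = (f b - f a - c * (b - a)) / 2 := by
    field_simp
  rw [hMe] at hmn; linarith

variable {d : ℕ}
local notation "E" => EuclideanSpace ℝ (Fin d)

lemma ae_line_null (N : Set (EuclideanSpace ℝ (Fin d))) (hNm : MeasurableSet N)
    (hN : volume N = 0) (x u : EuclideanSpace ℝ (Fin d)) :
    ∀ᵐ v : EuclideanSpace ℝ (Fin d), volume {t : ℝ | x + t • u + v ∈ N} = 0 := by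
  set S : Set (ℝ × EuclideanSpace ℝ (Fin d)) := {p | x + p.1 • u + p.2 ∈ N} with hS
  have hSm : MeasurableSet S := by
    have hc : Continuous (fun p : ℝ × EuclideanSpace ℝ (Fin d) => x + p.1 • u + p.2) := by
      fun_prop
    exact hc.measurable hNm
  have hSnull : (volume : Measure ℝ).prod (volume) S = 0 := by
    rw [Measure.measure_prod_null hSm]
    filter_upwards with t
    have : (Prod.mk t ⁻¹' S) = (fun v => v + (x + t • u)) ⁻¹' N := by
      ext v; simp [hS, add_comm]
    rw [this, measure_preimage_add_right _ _ _]
    exact hN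
  have hswap : (volume : Measure (EuclideanSpace ℝ (Fin d))).prod (volume : Measure ℝ)
      (Prod.swap ⁻¹' S) = 0 := by
    rw [← Measure.prod_swap, Measure.map_apply measurable_swap (measurable_swap hSm)]
    rw [← Set.preimage_comp, Prod.swap_swap_eq, Set.preimage_id]; exact hSnull
  have := (Measure.measure_prod_null (measurable_swap hSm)).1 hswap
  filter_upwards [this] with v hv
  have heq : (Prod.mk v ⁻¹' (Prod.swap ⁻¹' S)) = {t : ℝ | x + t • u + v ∈ N} := rfl
  rw [← heq]; exact hv

lemma min_norm_inner {d : ℕ} (Kset : Set (EuclideanSpace ℝ (Fin d))) (hK : Convex ℝ Kset)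
    (g : EuclideanSpace ℝ (Fin d)) (hg : g ∈ Kset) (hmin : ∀ g' ∈ Kset, ‖g‖ ≤ ‖g'‖)
    (w : EuclideanSpace ℝ (Fin d)) (hw : w ∈ Kset) :
    ‖g‖ ^ 2 ≤ ⟪g, w⟫ := by
  have key : ∀ θ : ℝ, 0 < θ → θ ≤ 1 → 0 ≤ 2 * ⟪g, w - g⟫ + θ * ‖w - g‖ ^ 2 := by
    intro θ hθ0 hθ1
    have hmem : g + θ • (w - g) ∈ Kset := by
      have := hK hg hw (by linarith : (0:ℝ) ≤ 1 - θ) hθ0.le (by ring)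
      convert this using 1
      module
    have hle := hmin _ hmem
    have hsq : ‖g‖ ^ 2 ≤ ‖g + θ • (w - g)‖ ^ 2 := by
      have := mul_self_le_mul_self (norm_nonneg g) hle
      nlinarith
    have hexp : ‖g + θ • (w - g)‖ ^ 2
        = ‖g‖ ^ 2 + 2 * (θ * ⟪g, w - g⟫) + θ ^ 2 * ‖w - g‖ ^ 2 := by
      rw [norm_add_sq_real, real_inner_smul_right, norm_smul]
      rw [Real.norm_eq_abs, abs_of_pos hθ0]
      ring
    rw [hexp] at hsq
    nlinarith
  have h0 : 0 ≤ ⟪g, w - g⟫ := by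
    by_contra hcon
    push_neg at hcon
    rcases le_or_gt (2 * ⟪g, w - g⟫ + ‖w - g‖^2) 0 with hc | hc
    · have := key (1/2) one_half_pos (by norm_num)
      linarith
    · set θ := min 1 (-(⟪g, w - g⟫) / ‖w - g‖^2) with hθ
      have hn : (0:ℝ) < ‖w - g‖ ^ 2 := by nlinarith
      have hθ0 : 0 < θ := lt_min one_pos (div_pos (by linarith) hn)
      have := key θ hθ0 (min_le_left _ _)
      have hθle : θ ≤ -(⟪g, w - g⟫) / ‖w - g‖^2 := min_le_right _ _
      have : θ * ‖w - g‖^2 ≤ -(⟪g, w - g⟫) := by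
        rw [div_eq_mul_inv] at hθle
        calc θ * ‖w - g‖^2 ≤ (-(⟪g, w - g⟫) * (‖w - g‖^2)⁻¹) * ‖w - g‖^2 :=
          mul_le_mul_of_nonneg_right hθle hn.le
        _ = -(⟪g, w - g⟫) := by rw [mul_assoc, inv_mul_cancel₀ hn.ne', mul_one]
      nlinarith [key θ hθ0 (min_le_left _ _)]
  have : ⟪g, w - g⟫ = ⟪g, w⟫ - ‖g‖^2 := by
    rw [inner_sub_right, real_inner_self_eq_norm_sq]
  linarith [h0, this ▸ h0]

/-- The Clarke subdifferential of `h` at `x`. -/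
noncomputable def clarkeSubdiff {d : ℕ} (h : EuclideanSpace ℝ (Fin d) → ℝ)
    (x : EuclideanSpace ℝ (Fin d)) : Set (EuclideanSpace ℝ (Fin d)) :=
  convexHull ℝ {g | ∃ u : ℕ → EuclideanSpace ℝ (Fin d),
    (∀ n, DifferentiableAt ℝ h (u n)) ∧ Tendsto u atTop (𝓝 x) ∧
    Tendsto (fun n => gradient h (u n)) atTop (𝓝 g)}

/-- The Goldstein `α`-subdifferential: `conv(∪_{y ∈ B(x,α)} ∂h(y))`. -/
noncomputable def goldsteinSubdiff {d : ℕ} (h : EuclideanSpace ℝ (Fin d) → ℝ) (α : ℝ)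
    (x : EuclideanSpace ℝ (Fin d)) : Set (EuclideanSpace ℝ (Fin d)) :=
  convexHull ℝ (⋃ y ∈ Metric.closedBall x α, clarkeSubdiff h y)

/-- Goldstein's descent property: stepping distance `α` against the minimum-norm element `g` of
the Goldstein `α`-subdifferential decreases the function value by at least `α‖g‖`. -/
theorem goldstein_descent (d : ℕ) (L α : ℝ) (hα : 0 < α)
    (h : EuclideanSpace ℝ (Fin d) → ℝ)
    (hLip : ∀ x y : EuclideanSpace ℝ (Fin d), |h x - h y| ≤ L * ‖x - y‖)
    (x g : EuclideanSpace ℝ (Fin d))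
    (hg : g ∈ goldsteinSubdiff h α x)
    (hmin : ∀ g' ∈ goldsteinSubdiff h α x, ‖g‖ ≤ ‖g'‖)
    (hg0 : ‖g‖ ≠ 0) :
    h (x - (α / ‖g‖) • g) ≤ h x - α * ‖g‖ := by
  have hgpos : 0 < ‖g‖ := lt_of_le_of_ne (norm_nonneg g) (Ne.symm hg0)
  rcases Nat.eq_zero_or_pos d with rfl | hd
  · exfalso; apply hg0; rw [Subsingleton.elim g 0]; simp
  -- L is nonnegative
  have hL : 0 ≤ L := by
    have h1 := hLip (EuclideanSpace.single (⟨0, hd⟩ : Fin d) (1:ℝ)) 0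
    have h2 : ‖EuclideanSpace.single (⟨0, hd⟩ : Fin d) (1:ℝ) - 0‖ = 1 := by
      rw [sub_zero, EuclideanSpace.norm_single]; norm_num
    rw [h2, mul_one] at h1
    exact le_trans (abs_nonneg _) h1
  set K : NNReal := L.toNNReal with hK
  have hlip : LipschitzWith K h := by
    apply LipschitzWith.of_dist_le_mul
    intro a b
    rw [Real.dist_eq, dist_eq_norm]
    calc |h a - h b| ≤ L * ‖a - b‖ := hLip a b
      _ ≤ K * ‖a - b‖ := by
        apply mul_le_mul_of_nonneg_right _ (norm_nonneg _)
        exact Real.le_coe_toNNReal L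
  have hKL : (K : ℝ) = L := by rw [hK, Real.coe_toNNReal _ hL]
  set u : EuclideanSpace ℝ (Fin d) := -(‖g‖⁻¹ • g) with hu
  have hunorm : ‖u‖ = 1 := by
    rw [hu, norm_neg, norm_smul, norm_inv, norm_norm, inv_mul_cancel₀ hg0]
  -- the non-differentiability set is null and measurable
  set N : Set (EuclideanSpace ℝ (Fin d)) := {y | ¬ DifferentiableAt ℝ h y} with hN
  have hNm : MeasurableSet N := (measurableSet_of_differentiableAt ℝ h).compl
  have hNnull : volume N = 0 := by
    have h1 := hlip.ae_differentiableAt (μ := volume)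
    rw [ae_iff] at h1
    exact h1
  -- main estimate for each ε ∈ (0, α)
  have claim : ∀ ε : ℝ, 0 < ε → ε < α →
      h (x + (α - ε) • u) ≤ h x - (α - ε) * ‖g‖ + 2 * L * ε := by
    intro ε hε hεα
    -- pick a good shift v with ‖v‖ < ε
    have hball : volume (Metric.ball (0 : EuclideanSpace ℝ (Fin d)) ε) ≠ 0 :=
      (Metric.measure_ball_pos volume 0 hε).ne'
    obtain ⟨v, hvball, hvgood⟩ :=
      Measure.exists_mem_of_measure_ne_zero_of_ae hball
        (ae_restrict_of_ae (ae_line_null N hNm hNnull x u))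
    have hvnorm : ‖v‖ < ε := by
      rwa [Metric.mem_ball, dist_zero_right] at hvball
    set φ : ℝ → ℝ := fun t => h (x + t • u + v) with hφ
    have hφlip : LipschitzWith K φ := by
      have hl : LipschitzWith 1 (fun t : ℝ => x + t • u + v) := by
        apply LipschitzWith.of_dist_le_mul
        intro a b
        simp only [dist_eq_norm, Real.dist_eq, NNReal.coe_one, one_mul]
        have : (x + a • u + v) - (x + b • u + v) = (a - b) • u := by
          rw [sub_smul]; abel
        rw [this, norm_smul, hunorm, mul_one, Real.norm_eq_abs]
      have := hlip.comp hl; rw [mul_one] at this; exact this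
    have hstep := key1D φ K hφlip (-‖g‖) 0 (α - ε) (by linarith)
      {t : ℝ | x + t • u + v ∈ N} hvgood ?_
    · -- conclude the claim from the 1-D estimate
      have h0 : φ 0 = h (x + v) := by simp [hφ]
      have hb : φ (α - ε) = h (x + (α - ε) • u + v) := rfl
      have hA : |h (x + (α - ε) • u + v) - h (x + (α - ε) • u)| ≤ L * ε := by
        calc |h (x + (α - ε) • u + v) - h (x + (α - ε) • u)|
            ≤ L * ‖(x + (α - ε) • u + v) - (x + (α - ε) • u)‖ := hLip _ _
          _ ≤ L * ε := by
            apply mul_le_mul_of_nonneg_left _ hL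
            simpa using hvnorm.le
      have hB : |h (x + v) - h x| ≤ L * ε := by
        calc |h (x + v) - h x| ≤ L * ‖(x + v) - x‖ := hLip _ _
          _ ≤ L * ε := by
            apply mul_le_mul_of_nonneg_left _ hL
            simpa using hvnorm.le
      have hA' := abs_le.1 hA
      have hB' := abs_le.1 hB
      rw [h0, hb] at hstep
      have : -‖g‖ * (α - ε - 0) = -((α - ε) * ‖g‖) := by ring
      rw [this] at hstep
      linarith [hA'.2, hB'.2, hA'.1, hB'.1, hstep]
    · -- derivative bound at differentiable points
      intro t ht hts
      set p : EuclideanSpace ℝ (Fin d) := x + t • u + v with hp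
      have hdiff : DifferentiableAt ℝ h p := by
        by_contra hcon
        exact hts hcon
      have hline : HasDerivAt (fun s : ℝ => x + s • u + v) u t := by
        simpa using (((hasDerivAt_id t).smul_const u).const_add x).add_const v
      have hder : HasDerivAt φ (fderiv ℝ h p u) t :=
        hdiff.hasFDerivAt.comp_hasDerivAt t hline
      refine ⟨fderiv ℝ h p u, hder, ?_⟩
      -- the gradient is in the Goldstein subdifferential
      set w : EuclideanSpace ℝ (Fin d) := gradient h p with hw
      have hpball : p ∈ Metric.closedBall x α := by
        rw [Metric.mem_closedBall, dist_eq_norm]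
        have : p - x = t • u + v := by rw [hp]; abel
        rw [this]
        calc ‖t • u + v‖ ≤ ‖t • u‖ + ‖v‖ := norm_add_le _ _
          _ ≤ (α - ε) + ε := by
            apply add_le_add _ hvnorm.le
            rw [norm_smul, hunorm, mul_one, Real.norm_eq_abs, abs_of_nonneg ht.1]
            exact ht.2
          _ = α := by ring
      have hwmem : w ∈ goldsteinSubdiff h α x := by
        apply subset_convexHull
        apply Set.mem_biUnion hpball
        apply subset_convexHull
        exact ⟨fun _ => p, fun _ => hdiff, tendsto_const_nhds, tendsto_const_nhds⟩
      have hinner : ‖g‖ ^ 2 ≤ ⟪g, w⟫ :=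
        min_norm_inner _ (convex_convexHull ℝ _) g hg hmin w hwmem
      -- fderiv ℝ h p u = ⟪w, u⟫
      have hfd : fderiv ℝ h p u = ⟪w, u⟫ := by
        rw [hw]
        exact (InnerProductSpace.toDual_symm_apply).symm
      rw [hfd, hu, inner_neg_right, real_inner_smul_right]
      rw [real_inner_comm] at hinner
      have hinv : (0:ℝ) ≤ ‖g‖⁻¹ := by positivity
      have h2 : ‖g‖⁻¹ * ‖g‖ ^ 2 ≤ ‖g‖⁻¹ * ⟪w, g⟫ :=
        mul_le_mul_of_nonneg_left hinner hinv
      have h3 : ‖g‖⁻¹ * ‖g‖ ^ 2 = ‖g‖ := by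
        rw [pow_two, ← mul_assoc, inv_mul_cancel₀ hg0, one_mul]
      linarith
  -- pass to the limit ε → 0
  have hxα : x - (α / ‖g‖) • g = x + α • u := by
    rw [hu, smul_neg, smul_smul, sub_eq_add_neg, div_eq_mul_inv, mul_comm]
  rw [hxα]
  by_contra hcon
  push_neg at hcon
  set D : ℝ := h (x + α • u) - (h x - α * ‖g‖) with hD
  have hDpos : 0 < D := by rw [hD]; linarith
  set C : ℝ := 3 * L + ‖g‖ with hC
  have hCpos : 0 < C := by rw [hC]; linarith
  set ε : ℝ := min (α / 2) (D / (2 * C)) with hε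
  have hε0 : 0 < ε := lt_min (by linarith) (by positivity)
  have hεα : ε < α := lt_of_le_of_lt (min_le_left _ _) (by linarith)
  have hcl := claim ε hε0 hεα
  -- h(x+α•u) ≤ h(x+(α-ε)•u) + L*ε
  have hstep2 : h (x + α • u) ≤ h (x + (α - ε) • u) + L * ε := by
    have := (abs_le.1 (hLip (x + α • u) (x + (α - ε) • u))).2
    have hnorm : ‖(x + α • u) - (x + (α - ε) • u)‖ = ε := by
      have heq : (x + α • u) - (x + (α - ε) • u) = ε • u := by
        rw [sub_smul]; abel
      rw [heq, norm_smul, hunorm, mul_one, Real.norm_eq_abs, abs_of_pos hε0]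
    rw [hnorm] at this
    linarith
  have hfinal : D ≤ C * ε := by
    rw [hD, hC]
    have : -(α - ε) * ‖g‖ = -(α * ‖g‖) + ε * ‖g‖ := by ring
    nlinarith [hcl, hstep2]
  have hεD : ε ≤ D / (2 * C) := min_le_right _ _
  have : C * ε ≤ C * (D / (2 * C)) := mul_le_mul_of_nonneg_left hεD hCpos.le
  have hCD : C * (D / (2 * C)) = D / 2 := by field_simp
  rw [hCD] at this
  linarith
end

section
/- For an L-Lipschitz function h : ℝ^d → ℝ and λ > 0, the Lasry-Lions regularization h̃_λ := −M_λ(−M_{2λ}(h)) has the same set of global minimizers and the same infimum as h: inf h̃_λ = inf h and argmin h̃_λ = argmin h. -/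
/-- The Moreau envelope `M_μ(g)(x) = inf_y [g(y) + ‖y − x‖²/(2μ)]`. -/
noncomputable def moreauEnv {d : ℕ} (mu : ℝ) (h : EuclideanSpace ℝ (Fin d) → ℝ)
    (x : EuclideanSpace ℝ (Fin d)) : ℝ :=
  ⨅ y : EuclideanSpace ℝ (Fin d), (h y + ‖y - x‖ ^ 2 / (2 * mu))

/-- The Lasry-Lions regularization `h̃_λ = −M_λ(−M_{2λ}(h))`. -/
noncomputable def lasryLions {d : ℕ} (lam : ℝ) (h : EuclideanSpace ℝ (Fin d) → ℝ)
    (x : EuclideanSpace ℝ (Fin d)) : ℝ :=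
  -(moreauEnv lam (fun y => -(moreauEnv (2 * lam) h y)) x)

private lemma lip_bdd {d : ℕ} (mu L1 : ℝ) (hmu : 0 < mu) (h : EuclideanSpace ℝ (Fin d) → ℝ)
    (hLip : ∀ x y, |h x - h y| ≤ L1 * ‖x - y‖) (x : EuclideanSpace ℝ (Fin d)) :
    ∀ y, h x - mu * L1 ^ 2 / 2 ≤ h y + ‖y - x‖ ^ 2 / (2 * mu) := by
  intro y
  have h1 : h x - h y ≤ L1 * ‖x - y‖ := le_of_abs_le (hLip x y)
  rw [norm_sub_rev] at h1
  have key : L1 * ‖y - x‖ - mu * L1 ^ 2 / 2 ≤ ‖y - x‖ ^ 2 / (2 * mu) := by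
    rw [le_div_iff₀ (by positivity)]
    nlinarith [sq_nonneg (‖y - x‖ - mu * L1)]
  linarith

/-- The Lasry-Lions regularization of an `L`-Lipschitz function has the same infimum and the
same set of global minimizers as the function itself. -/
theorem lasryLions_inf_argmin (d : ℕ) (L lam : ℝ) (hlam : 0 < lam)
    (h : EuclideanSpace ℝ (Fin d) → ℝ)
    (hLip : ∀ x y : EuclideanSpace ℝ (Fin d), |h x - h y| ≤ L * ‖x - y‖) :
    (⨅ x : EuclideanSpace ℝ (Fin d), lasryLions lam h x)
      = (⨅ x : EuclideanSpace ℝ (Fin d), h x) ∧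
    {x : EuclideanSpace ℝ (Fin d) | ∀ y, lasryLions lam h x ≤ lasryLions lam h y}
      = {x : EuclideanSpace ℝ (Fin d) | ∀ y, h x ≤ h y} := by
  classical
  set L1 : ℝ := max L 1 with hL1def
  have hL1pos : (0 : ℝ) < L1 := lt_of_lt_of_le one_pos (le_max_right _ _)
  have hLip1 : ∀ x y : EuclideanSpace ℝ (Fin d), |h x - h y| ≤ L1 * ‖x - y‖ := fun x y =>
    (hLip x y).trans (mul_le_mul_of_nonneg_right (le_max_left L 1) (norm_nonneg _))
  set g : EuclideanSpace ℝ (Fin d) → ℝ := moreauEnv (2 * lam) h with hgdef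
  -- inner sets for g are bounded below
  have hg_bdd : ∀ x : EuclideanSpace ℝ (Fin d), BddBelow (Set.range fun y => h y + ‖y - x‖ ^ 2 / (2 * (2 * lam))) :=
    fun x => ⟨h x - (2 * lam) * L1 ^ 2 / 2, Set.forall_mem_range.mpr
      (lip_bdd (2 * lam) L1 (by linarith) h hLip1 x)⟩
  -- g ≤ h
  have hg_le : ∀ x : EuclideanSpace ℝ (Fin d), g x ≤ h x := by
    intro x
    have := ciInf_le (hg_bdd x) x
    simpa [hgdef, moreauEnv] using this
  -- g y ≤ h x + ‖x - y‖²/(4λ)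
  have hg_le' : ∀ x y : EuclideanSpace ℝ (Fin d), g y ≤ h x + ‖x - y‖ ^ 2 / (2 * (2 * lam)) := by
    intro x y
    exact ciInf_le (hg_bdd y) x
  -- inner sets for h̃ are bounded below, by -h x
  have hbdd2 : ∀ x : EuclideanSpace ℝ (Fin d), ∀ y : EuclideanSpace ℝ (Fin d), -h x ≤ -(g y) + ‖y - x‖ ^ 2 / (2 * lam) := by
    intro x y
    have h1 : g y ≤ h x + ‖y - x‖ ^ 2 / (2 * (2 * lam)) := by
      have := hg_le' x y
      rwa [norm_sub_rev] at this
    have h2 : ‖y - x‖ ^ 2 / (2 * (2 * lam)) ≤ ‖y - x‖ ^ 2 / (2 * lam) := by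
      apply div_le_div_of_nonneg_left (by positivity) (by linarith) (by linarith)
    linarith
  have hbdd2' : ∀ x : EuclideanSpace ℝ (Fin d), BddBelow (Set.range fun y => -(g y) + ‖y - x‖ ^ 2 / (2 * lam)) :=
    fun x => ⟨-h x, Set.forall_mem_range.mpr (hbdd2 x)⟩
  -- h̃ ≤ h
  have ht_le_h : ∀ x : EuclideanSpace ℝ (Fin d), lasryLions lam h x ≤ h x := by
    intro x
    have : -h x ≤ moreauEnv lam (fun y => -(moreauEnv (2 * lam) h y)) x :=
      le_ciInf (hbdd2 x)
    simp only [lasryLions]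
    linarith
  -- g ≤ h̃
  have g_le_ht : ∀ x : EuclideanSpace ℝ (Fin d), g x ≤ lasryLions lam h x := by
    intro x
    have : moreauEnv lam (fun y => -(moreauEnv (2 * lam) h y)) x ≤ -(g x) := by
      have := ciInf_le (hbdd2' x) x
      simpa [moreauEnv, hgdef] using this
    simp only [lasryLions]
    linarith
  -- lower bounds of h transfer to g
  have lb_g : ∀ m : ℝ, (∀ z : EuclideanSpace ℝ (Fin d), m ≤ h z) → ∀ x : EuclideanSpace ℝ (Fin d), m ≤ g x := by
    intro m hm x
    refine le_ciInf fun z => ?_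
    have : (0:ℝ) ≤ ‖z - x‖ ^ 2 / (2 * (2 * lam)) := by positivity
    linarith [hm z]
  by_cases hbb : BddBelow (Set.range h)
  · -- bounded below case
    set m : ℝ := ⨅ x : EuclideanSpace ℝ (Fin d), h x with hmdef
    have hm_le : ∀ z : EuclideanSpace ℝ (Fin d), m ≤ h z := fun z => ciInf_le hbb z
    have hm_g : ∀ x : EuclideanSpace ℝ (Fin d), m ≤ g x := lb_g m hm_le
    have hm_ht : ∀ x : EuclideanSpace ℝ (Fin d), m ≤ lasryLions lam h x := fun x => (hm_g x).trans (g_le_ht x)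
    constructor
    · apply le_antisymm
      · exact ciInf_mono ⟨m, Set.forall_mem_range.mpr hm_ht⟩ ht_le_h
      · exact le_ciInf hm_ht
    · ext x
      simp only [Set.mem_setOf_eq]
      constructor
      · -- x minimizes h̃ ⟹ x minimizes h
        intro hx y
        have h3 : lasryLions lam h x ≤ m :=
          le_ciInf fun z => (hx z).trans (ht_le_h z)
        have hgx : g x = m := le_antisymm ((g_le_ht x).trans h3) (hm_g x)
        suffices hxx : h x ≤ m by exact hxx.trans (hm_le y)
        by_contra hcon
        push_neg at hcon
        set δ : ℝ := h x - m with hδdef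
        have hδ : 0 < δ := by simp only [hδdef]; linarith
        set ε : ℝ := min (δ / 2) (δ ^ 2 / (16 * L1 ^ 2 * lam)) with hεdef
        have hε : 0 < ε := lt_min (by linarith) (by positivity)
        have hgx2 : m + ε ≤ g x := by
          refine le_ciInf fun z => ?_
          rcases le_or_gt ‖z - x‖ (δ / (2 * L1)) with ht | ht
          · -- small distance: h z is close to h x
            have h4 : h x - h z ≤ L1 * ‖x - z‖ := le_of_abs_le (hLip1 x z)
            rw [norm_sub_rev] at h4
            have h5 : L1 * ‖z - x‖ ≤ L1 * (δ / (2 * L1)) :=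
              mul_le_mul_of_nonneg_left ht hL1pos.le
            have h6 : L1 * (δ / (2 * L1)) = δ / 2 := by
              field_simp
            have h7 : (0:ℝ) ≤ ‖z - x‖ ^ 2 / (2 * (2 * lam)) := by positivity
            have h8 : ε ≤ δ / 2 := min_le_left _ _
            -- h z ≥ h x - δ/2 = m + δ/2 ≥ m + ε
            have : h x - δ / 2 ≤ h z := by
              rw [← h6]
              linarith
            simp only [hδdef] at this
            linarith
          · -- large distance: quadratic term dominates
            have h4 : m ≤ h z := hm_le z
            have h5 : (δ / (2 * L1)) ^ 2 ≤ ‖z - x‖ ^ 2 :=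
              pow_le_pow_left₀ (by positivity) ht.le 2
            have h6 : (δ / (2 * L1)) ^ 2 / (2 * (2 * lam)) ≤ ‖z - x‖ ^ 2 / (2 * (2 * lam)) := by
              gcongr
            have h7 : (δ / (2 * L1)) ^ 2 / (2 * (2 * lam)) = δ ^ 2 / (16 * L1 ^ 2 * lam) := by
              field_simp
              ring
            have h8 : ε ≤ δ ^ 2 / (16 * L1 ^ 2 * lam) := min_le_right _ _
            rw [h7] at h6
            linarith
        rw [hgx] at hgx2
        linarith
      · -- x minimizes h ⟹ x minimizes h̃
        intro hx y
        have hxm : h x ≤ m := le_ciInf hx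
        calc lasryLions lam h x ≤ h x := ht_le_h x
          _ ≤ m := hxm
          _ ≤ g y := hm_g y
          _ ≤ lasryLions lam h y := g_le_ht y
  · -- unbounded below case: both infima are junk 0, both argmin sets empty
    have hbt : ¬ BddBelow (Set.range (lasryLions lam h)) := by
      rintro ⟨c, hc⟩
      exact hbb ⟨c, Set.forall_mem_range.mpr fun x =>
        (hc (Set.mem_range_self x)).trans (ht_le_h x)⟩
    constructor
    · rw [Real.iInf_of_not_bddBelow hbt, Real.iInf_of_not_bddBelow hbb]
    · ext x
      simp only [Set.mem_setOf_eq]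
      constructor
      · intro hx
        exact (hbb ⟨lasryLions lam h x, Set.forall_mem_range.mpr fun z =>
          (hx z).trans (ht_le_h z)⟩).elim
      · intro hx
        exact (hbb ⟨h x, Set.forall_mem_range.mpr hx⟩).elim
end

section
/- If h : ℝ^d → ℝ is L-Lipschitz and x is a point where the Lasry-Lions regularization h̃_λ is differentiable with ‖∇h̃_λ(x)‖ ≤ β ≤ L, then x is a (3λL, β)-Goldstein stationary point of h. -/
open Filter Topology

open Metric Set MeasureTheory
open scoped ENNReal NNReal

set_option maxHeartbeats 1600000

section auxiliary

lemma pad_sum {α : Type*} [AddCommMonoid α] {m n : ℕ} (hmn : m ≤ n) (g : Fin m → α) :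
    (∑ i : Fin n, if hi : (i : ℕ) < m then g ⟨i, hi⟩ else 0) = ∑ j : Fin m, g j := by
  classical
  set g' : ℕ → α := fun k => if hk : k < m then g ⟨k, hk⟩ else 0 with hg'
  have h1 : (∑ i : Fin n, if hi : (i : ℕ) < m then g ⟨i, hi⟩ else 0) = ∑ i : Fin n, g' i := rfl
  have h2 : ∑ i : Fin n, g' (i : ℕ) = ∑ k ∈ Finset.range n, g' k :=
    Fin.sum_univ_eq_sum_range g' n
  have h3 : ∑ k ∈ Finset.range m, g' k = ∑ k ∈ Finset.range n, g' k := by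
    apply Finset.sum_subset (Finset.range_subset_range.mpr hmn)
    intro k _ hk
    simp only [Finset.mem_range] at hk
    simp [hg', hk]
  have h4 : ∑ k ∈ Finset.range m, g' k = ∑ j : Fin m, g' (j : ℕ) :=
    (Fin.sum_univ_eq_sum_range g' m).symm
  have h5 : ∀ j : Fin m, g' (j : ℕ) = g j := by
    intro j; simp [hg', j.2]
  rw [h1, h2, ← h3, h4]
  exact Finset.sum_congr rfl fun j _ => h5 j

lemma isCompact_convexHull_of_isCompact {V : Type*} [NormedAddCommGroup V] [NormedSpace ℝ V]
    [FiniteDimensional ℝ V] {s : Set V} (hs : IsCompact s) : IsCompact (convexHull ℝ s) := by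
  classical
  rcases s.eq_empty_or_nonempty with rfl | ⟨p₀, hp₀⟩
  · simpa using isCompact_empty
  set n := Module.finrank ℝ V + 1 with hn
  set T : (Fin n → ℝ) × (Fin n → V) → V := fun q => ∑ i, q.1 i • q.2 i with hT
  have hTc : Continuous T := by
    apply continuous_finset_sum
    intro i _
    exact ((continuous_apply i).comp continuous_fst).smul
      ((continuous_apply i).comp continuous_snd)
  have hD : IsCompact ((stdSimplex ℝ (Fin n)) ×ˢ (Set.univ.pi fun _ : Fin n => s)) :=
    (isCompact_stdSimplex ℝ _).prod (isCompact_univ_pi fun _ => hs)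
  have himg : convexHull ℝ s
      = T '' ((stdSimplex ℝ (Fin n)) ×ˢ (Set.univ.pi fun _ : Fin n => s)) := by
    apply Subset.antisymm
    · intro x hx
      rw [convexHull_eq_union] at hx
      simp only [mem_iUnion] at hx
      obtain ⟨t, htss, hai, hxt⟩ := hx
      have hcard : t.card ≤ n := by
        have h1 := hai.card_le_finrank_succ
        have h2 : Module.finrank ℝ (vectorSpan ℝ (Set.range ((↑) : ↥t → V)))
            ≤ Module.finrank ℝ V := Submodule.finrank_le _
        rw [Fintype.card_coe] at h1
        omega
      rw [Finset.convexHull_eq] at hxt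
      obtain ⟨w, hw0, hw1, hwc⟩ := hxt
      set m := t.card with hm
      set e : Fin m ≃ ↥t := t.equivFin.symm with he
      set W : Fin n → ℝ := fun i => if hi : (i : ℕ) < m then w (e ⟨i, hi⟩) else 0 with hW
      set Z : Fin n → V := fun i => if hi : (i : ℕ) < m then ((e ⟨i, hi⟩ : ↥t) : V) else p₀
        with hZ
      have hsumW : ∑ i : Fin n, W i = 1 := by
        have := pad_sum hcard (fun j : Fin m => w (e j))
        rw [hW, this]
        have h6 : ∑ j : Fin m, w (e j) = ∑ y : ↥t, w y := Equiv.sum_comp e (fun y : ↥t => w y)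
        rw [h6, ← hw1]
        exact Finset.sum_coe_sort t w
      have hsumZ : ∑ i : Fin n, W i • Z i = x := by
        have heq : ∀ i : Fin n, W i • Z i
            = if hi : (i : ℕ) < m then w (e ⟨i, hi⟩) • ((e ⟨i, hi⟩ : ↥t) : V) else 0 := by
          intro i
          by_cases hi : (i : ℕ) < m <;> simp [hW, hZ, hi]
        rw [Finset.sum_congr rfl fun i _ => heq i,
          pad_sum hcard (fun j : Fin m => w (e j) • ((e j : ↥t) : V))]
        have h6 : ∑ j : Fin m, w (e j) • ((e j : ↥t) : V) = ∑ y : ↥t, w y • (y : V) :=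
          Equiv.sum_comp e (fun y : ↥t => w y • (y : V))
        rw [h6]
        have h7 : ∑ y : ↥t, w y • (y : V) = ∑ y ∈ t, w y • y :=
          Finset.sum_coe_sort t (fun y => w y • y)
        rw [h7, ← hwc, Finset.centerMass_eq_of_sum_1 t id hw1]
        simp
      refine ⟨(W, Z), ⟨?_, ?_⟩, hsumZ⟩
      · constructor
        · intro i
          by_cases hi : (i : ℕ) < m
          · simp only [hW, hi, dif_pos]
            exact hw0 _ (Finset.coe_mem _)
          · simp [hW, hi]
        · exact hsumW
      · rw [Set.mem_univ_pi]
        intro i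
        by_cases hi : (i : ℕ) < m
        · simp only [hZ, hi, dif_pos]
          exact htss (Finset.coe_mem _)
        · simpa [hZ, hi] using hp₀
    · rintro z ⟨⟨W, Z⟩, ⟨hWmem, hZmem⟩, rfl⟩
      have hWmem' := hWmem
      obtain ⟨hW0, hW1⟩ := hWmem'
      refine Convex.sum_mem (convex_convexHull ℝ s) (fun i _ => hW0 i) hW1 ?_
      intro i _
      apply subset_convexHull
      rw [Set.mem_univ_pi] at hZmem
      exact hZmem i
  rw [himg]
  exact hD.image hTc

variable {d : ℕ}

local notation "E" => EuclideanSpace ℝ (Fin d)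

variable {L lam mu : ℝ} {h : EuclideanSpace ℝ (Fin d) → ℝ}

/-- attainment of quadratically perturbed minimization -/
lemma exists_forall_min (c : ℝ) (hc : 0 < c) (hL : 0 ≤ L) (φ : E → ℝ) (hφ : Continuous φ)
    (hcoer : ∀ y₀ z : E, φ y₀ - L * ‖z - y₀‖ ≤ φ z) (y₀ : E) :
    ∃ w : E, ∀ z : E, φ w + ‖w - y₀‖ ^ 2 / c ≤ φ z + ‖z - y₀‖ ^ 2 / c := by
  set f : E → ℝ := fun z => φ z + ‖z - y₀‖ ^ 2 / c with hf
  have hfc : Continuous f := by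
    apply hφ.add
    exact ((continuous_id.sub continuous_const).norm.pow 2).div_const c
  have hball : IsCompact (Metric.closedBall y₀ (L * c)) := isCompact_closedBall _ _
  have hne : (Metric.closedBall y₀ (L * c)).Nonempty :=
    ⟨y₀, Metric.mem_closedBall_self (by positivity)⟩
  obtain ⟨w, hwmem, hwmin⟩ := hball.exists_isMinOn hne hfc.continuousOn
  refine ⟨w, fun z => ?_⟩
  by_cases hz : z ∈ Metric.closedBall y₀ (L * c)
  · exact hwmin hz
  · have h1 : f w ≤ f y₀ := hwmin (Metric.mem_closedBall_self (by positivity))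
    have h2 : f y₀ ≤ f z := by
      have ht : L * c ≤ ‖z - y₀‖ := by
        have := Metric.mem_closedBall.not.mp hz
        rw [dist_eq_norm] at this; linarith [this]
      have h3 : φ y₀ - L * ‖z - y₀‖ ≤ φ z := hcoer y₀ z
      have h4 : L * ‖z - y₀‖ ≤ ‖z - y₀‖ ^ 2 / c := by
        rw [le_div_iff₀ hc]
        calc L * ‖z - y₀‖ * c = (L * c) * ‖z - y₀‖ := by ring
        _ ≤ ‖z - y₀‖ * ‖z - y₀‖ := by
            apply mul_le_mul_of_nonneg_right ht (norm_nonneg _)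
        _ = ‖z - y₀‖ ^ 2 := by ring
      simp only [hf, sub_self, norm_zero]
      have : (0:ℝ) ^ 2 / c = 0 := by simp
      rw [this]
      linarith
    simp only [hf] at h1 h2
    linarith

lemma moreau_lb (hmu : 0 < mu) (hL : 0 ≤ L)
    (hLip : ∀ x y : E, |h x - h y| ≤ L * ‖x - y‖) (y z : E) : h y - mu * L ^ 2 / 2 ≤ h z + ‖z - y‖ ^ 2 / (2 * mu) := by
  have h1 : h y - h z ≤ L * ‖z - y‖ := by
    have := hLip y z
    have h2 := (abs_le.mp this).2
    rwa [← norm_neg (y - z), neg_sub] at h2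
  have h3 : 0 ≤ (‖z - y‖ - mu * L) ^ 2 / (2 * mu) := by positivity
  have h4 : (‖z - y‖ - mu * L) ^ 2 / (2 * mu)
      = ‖z - y‖ ^ 2 / (2 * mu) - L * ‖z - y‖ + mu * L ^ 2 / 2 := by
    field_simp; ring
  nlinarith

lemma moreau_bdd (hmu : 0 < mu) (hL : 0 ≤ L)
    (hLip : ∀ x y : E, |h x - h y| ≤ L * ‖x - y‖) (y : E) :
    BddBelow (range fun z : E => h z + ‖z - y‖ ^ 2 / (2 * mu)) := by
  refine ⟨h y - mu * L ^ 2 / 2, ?_⟩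
  rintro v ⟨z, rfl⟩
  exact moreau_lb hmu hL hLip y z

lemma moreau_le (hmu : 0 < mu) (hL : 0 ≤ L)
    (hLip : ∀ x y : E, |h x - h y| ≤ L * ‖x - y‖) (y z : E) : moreauEnv mu h y ≤ h z + ‖z - y‖ ^ 2 / (2 * mu) :=
  ciInf_le (moreau_bdd hmu hL hLip y) z

lemma le_moreau {c : ℝ} (y : E) (hc : ∀ z : E, c ≤ h z + ‖z - y‖ ^ 2 / (2 * mu)) :
    c ≤ moreauEnv mu h y := le_ciInf hc

lemma moreau_lip (hmu : 0 < mu) (hL : 0 ≤ L)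
    (hLip : ∀ x y : E, |h x - h y| ≤ L * ‖x - y‖) (y y' : E) : moreauEnv mu h y ≤ moreauEnv mu h y' + L * ‖y - y'‖ := by
  refine le_of_forall_pos_le_add fun ε hε => ?_
  have hlt : moreauEnv mu h y' < moreauEnv mu h y' + ε := by linarith
  obtain ⟨z', hz'⟩ := exists_lt_of_ciInf_lt (by exact hlt :
    moreauEnv mu h y' < moreauEnv mu h y' + ε)
  have key : moreauEnv mu h y ≤ h (z' + (y - y')) + ‖z' - y'‖ ^ 2 / (2 * mu) := by
    have := moreau_le hmu hL hLip y (z' + (y - y'))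
    have heq : ‖z' + (y - y') - y‖ = ‖z' - y'‖ := by
      congr 1; abel
    rwa [heq] at this
  have hstep : h (z' + (y - y')) ≤ h z' + L * ‖y - y'‖ := by
    have := (abs_le.mp (hLip (z' + (y - y')) z')).2
    have heq : ‖z' + (y - y') - z'‖ = ‖y - y'‖ := by congr 1; abel
    rw [heq] at this; linarith
  linarith

lemma moreau_lipschitz (hmu : 0 < mu) (hL : 0 ≤ L)
    (hLip : ∀ x y : E, |h x - h y| ≤ L * ‖x - y‖) : LipschitzWith L.toNNReal (moreauEnv mu h) := by
  refine LipschitzWith.of_dist_le_mul fun y y' => ?_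
  rw [Real.dist_eq, dist_eq_norm, Real.coe_toNNReal L hL]
  rw [abs_sub_le_iff]
  constructor
  · have := moreau_lip hmu hL hLip y y'; linarith
  · have := moreau_lip hmu hL hLip y' y
    rw [← norm_neg (y' - y), neg_sub] at this; linarith

lemma deriv_eq_of_quad_lb {φ : ℝ → ℝ} {D a b : ℝ} (hD : HasDerivAt φ D 0)
    (hq : ∀ t : ℝ, a * t - b * t ^ 2 ≤ φ t - φ 0) : D = a := by
  have hslope := hasDerivAt_iff_tendsto_slope.mp hD
  have hIoi : Tendsto (slope φ 0) (𝓝[>] (0:ℝ)) (𝓝 D) :=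
    hslope.mono_left (nhdsWithin_mono _ (fun t ht => ne_of_gt ht))
  have hIio : Tendsto (slope φ 0) (𝓝[<] (0:ℝ)) (𝓝 D) :=
    hslope.mono_left (nhdsWithin_mono _ (fun t ht => ne_of_lt ht))
  have hlin : Tendsto (fun t : ℝ => a - b * t) (𝓝 (0:ℝ)) (𝓝 a) := by
    have hcont : Continuous (fun t : ℝ => a - b * t) := by continuity
    simpa using hcont.tendsto 0
  have h1 : a ≤ D := by
    refine le_of_tendsto_of_tendsto (hlin.mono_left nhdsWithin_le_nhds) hIoi
      (eventually_nhdsWithin_of_forall fun t ht => ?_)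
    have ht' : (0:ℝ) < t := ht
    rw [slope_def_field, sub_zero, le_div_iff₀ ht']
    have := hq t
    simp only []
    nlinarith
  have h2 : D ≤ a := by
    refine le_of_tendsto_of_tendsto hIio (hlin.mono_left nhdsWithin_le_nhds)
      (eventually_nhdsWithin_of_forall fun t ht => ?_)
    have ht' : t < (0:ℝ) := ht
    rw [slope_def_field, sub_zero, div_le_iff_of_neg ht']
    have := hq t
    simp only []
    nlinarith
  linarith

lemma gradient_eq_of_quad_subgrad {f : E → ℝ} {x s : E} {c : ℝ}
    (hdiff : DifferentiableAt ℝ f x)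
    (hsub : ∀ v : E, f x + inner ℝ s (v - x) - c * ‖v - x‖ ^ 2 ≤ f v) :
    gradient f x = s := by
  have key : ∀ u : E, (inner ℝ (gradient f x) u : ℝ) = inner ℝ s u := by
    intro u
    have hF : HasFDerivAt f (InnerProductSpace.toDual ℝ _ (gradient f x)) x :=
      hdiff.hasGradientAt.hasFDerivAt
    have hc' : HasDerivAt (fun t : ℝ => x + t • u) u 0 := by
      simpa using ((hasDerivAt_id (0:ℝ)).smul_const u).const_add x
    have hF' : HasFDerivAt f (InnerProductSpace.toDual ℝ _ (gradient f x)) (x + (0:ℝ) • u) := by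
      simpa using hF
    have hφ : HasDerivAt (fun t : ℝ => f (x + t • u))
        ((InnerProductSpace.toDual ℝ _ (gradient f x)) u) 0 := hF'.comp_hasDerivAt 0 hc'
    have hq : ∀ t : ℝ, (inner ℝ s u : ℝ) * t - (c * ‖u‖ ^ 2) * t ^ 2
        ≤ (fun t : ℝ => f (x + t • u)) t - (fun t : ℝ => f (x + t • u)) 0 := by
      intro t
      have h0 : x + (0:ℝ) • u = x := by simp
      have hv := hsub (x + t • u)
      have h1 : (x + t • u) - x = t • u := by abel
      rw [h1] at hv
      have h2 : (inner ℝ s (t • u) : ℝ) = t * inner ℝ s u := real_inner_smul_right s u t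
      have h3 : ‖t • u‖ ^ 2 = t ^ 2 * ‖u‖ ^ 2 := by
        rw [norm_smul, mul_pow, Real.norm_eq_abs, sq_abs]
      simp only [h0]
      rw [h2, h3] at hv
      ring_nf
      ring_nf at hv
      linarith
    have := deriv_eq_of_quad_lb hφ hq
    rw [InnerProductSpace.toDual_apply_apply] at this
    exact this
  have : ∀ u : E, (inner ℝ (gradient f x - s) u : ℝ) = 0 := by
    intro u
    rw [inner_sub_left]
    simp [key u]
  have h0 := this (gradient f x - s)
  rw [real_inner_self_eq_norm_sq] at h0
  have : gradient f x - s = 0 := by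
    rwa [pow_eq_zero_iff (by norm_num), norm_eq_zero] at h0
  rw [sub_eq_zero] at this
  exact this

lemma lipW (hL : 0 ≤ L) (hLip : ∀ x y : E, |h x - h y| ≤ L * ‖x - y‖) :
    LipschitzWith L.toNNReal h :=
  LipschitzWith.of_dist_le_mul fun a b => by
    rw [Real.dist_eq, dist_eq_norm, Real.coe_toNNReal _ hL]; exact hLip a b

lemma norm_gradient_le (hL : 0 ≤ L) (hLip : ∀ x y : E, |h x - h y| ≤ L * ‖x - y‖)
    {y : E} (hd : DifferentiableAt ℝ h y) : ‖gradient h y‖ ≤ L := by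
  have h1 : ‖fderiv ℝ h y‖ ≤ L := by
    have := hd.hasFDerivAt.le_of_lipschitz (lipW hL hLip)
    rwa [Real.coe_toNNReal _ hL] at this
  have h2 : ‖gradient h y‖ = ‖fderiv ℝ h y‖ := by
    rw [gradient]
    exact LinearIsometryEquiv.norm_map _ _
  rwa [h2]

lemma fderiv_apply_eq_inner {y : E} (hd : DifferentiableAt ℝ h y) (v : E) :
    fderiv ℝ h y v = inner ℝ (gradient h y) v := by
  have h1 : fderiv ℝ h y = InnerProductSpace.toDual ℝ _ (gradient h y) :=
    hd.hasGradientAt.hasFDerivAt.fderiv.symm.symm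
  rw [h1, InnerProductSpace.toDual_apply_apply]

open scoped Classical in
/-- key segment bound via averaging -/
lemma lip_segment_bound (hL : 0 ≤ L) (hLip : ∀ x y : E, |h x - h y| ≤ L * ‖x - y‖)
    (w e : E) {u δ : ℝ} (hδ : 0 < δ)
    (hgrad : ∀ y : E, y ∈ Metric.ball w δ → DifferentiableAt ℝ h y →
      (inner ℝ e (gradient h y) : ℝ) ≤ u)
    {τ : ℝ} (hτ : 0 ≤ τ) (hτδ : τ * ‖e‖ < δ) :
    h (w + τ • e) - h w ≤ u * τ := by
  have hcont : Continuous h := (lipW hL hLip).continuous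
  -- main step with mollification radius r
  have key : ∀ r : ℝ, 0 < r → r + τ * ‖e‖ < δ → h (w + τ • e) - h w ≤ u * τ + 2 * (L * r) := by
    intro r hr hrδ
    set B : Set E := Metric.closedBall (0 : E) r with hB
    have hBmeas : MeasurableSet B := measurableSet_closedBall
    have hBfin : volume B < ⊤ := measure_closedBall_lt_top
    have hBpos : (0 : ℝ≥0∞) < volume B := measure_closedBall_pos volume _ hr
    set V : ℝ := (volume B).toReal with hV
    have hVpos : 0 < V := ENNReal.toReal_pos (ne_of_gt hBpos) (ne_of_lt hBfin)
    set gBar : E → ℝ := fun q =>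
      if DifferentiableAt ℝ h q then (inner ℝ e (gradient h q) : ℝ) else 0 with hgBar
    have hgBarMeas : Measurable gBar := by
      apply Measurable.ite (measurableSet_of_differentiableAt ℝ h)
      · have m1 : Measurable (fun q : E => gradient h q) :=
          ((InnerProductSpace.toDual ℝ _).symm.continuous.measurable).comp
            (measurable_fderiv ℝ h)
        have m2 : Continuous (fun v : E => (inner ℝ e v : ℝ)) :=
          continuous_const.inner continuous_id
        exact m2.measurable.comp m1
      · exact measurable_const
    have hgBarBound : ∀ q : E, |gBar q| ≤ L * ‖e‖ := by
      intro q
      by_cases hq : DifferentiableAt ℝ h q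
      · simp only [hgBar, hq, if_pos]
        calc |(inner ℝ e (gradient h q) : ℝ)| ≤ ‖e‖ * ‖gradient h q‖ := abs_real_inner_le_norm _ _
        _ ≤ ‖e‖ * L := by
            apply mul_le_mul_of_nonneg_left (norm_gradient_le hL hLip hq) (norm_nonneg _)
        _ = L * ‖e‖ := mul_comm _ _
      · simp only [hgBar, hq, if_neg, not_false_iff, abs_zero]
        positivity
    set ψ : ℝ → ℝ := fun s => ∫ z in B, h (w + s • e - z) with hψ
    set Dfun : ℝ → ℝ := fun s => ∫ z in B, gBar (w + s • e - z) with hDfun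
    -- a.e. differentiability after translation
    have hae : ∀ s : ℝ, ∀ᵐ z ∂(volume.restrict B), DifferentiableAt ℝ h (w + s • e - z) := by
      intro s
      apply ae_restrict_of_ae
      have hRad : ∀ᵐ q : E ∂volume, DifferentiableAt ℝ h q := (lipW hL hLip).ae_differentiableAt
      rw [ae_iff] at hRad ⊢
      set N : Set E := {q | ¬DifferentiableAt ℝ h q} with hN
      have hpre : {z : E | ¬DifferentiableAt ℝ h (w + s • e - z)}
          = (fun z : E => -z) ⁻¹' ((fun q : E => q + (w + s • e)) ⁻¹' N) := by
        ext z
        simp only [Set.mem_setOf_eq, Set.mem_preimage, hN]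
        constructor <;> intro hz <;> [skip; skip] <;>
          · convert hz using 2
            abel
      rw [hpre]
      rw [Measure.measure_preimage_neg]
      rw [measure_preimage_add_right]
      exact hRad
    -- integrability
    have hInt : ∀ s : ℝ, IntegrableOn (fun z : E => h (w + s • e - z)) B := by
      intro s
      exact ContinuousOn.integrableOn_compact (isCompact_closedBall _ _)
        (hcont.comp ((continuous_const).sub continuous_id)).continuousOn
    have hIntG : ∀ s : ℝ, IntegrableOn (fun z : E => gBar (w + s • e - z)) B := by
      intro s
      have hm : Measurable (fun z : E => gBar (w + s • e - z)) :=
        hgBarMeas.comp (continuous_const.sub continuous_id).measurable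
      refine Integrable.mono' (g := fun _ : E => L * ‖e‖) ?_ hm.aestronglyMeasurable ?_
      · exact integrableOn_const hBfin.ne
      · exact Eventually.of_forall fun z => by
          rw [Real.norm_eq_abs]; exact hgBarBound _
    -- derivative of ψ
    have hDer : ∀ s : ℝ, HasDerivAt ψ (Dfun s) s := by
      intro s
      rw [hasDerivAt_iff_tendsto_slope]
      have hslope_eq : ∀ t : ℝ, t ≠ s → slope ψ s t
          = ∫ z in B, (h (w + t • e - z) - h (w + s • e - z)) / (t - s) := by
        intro t ht
        rw [slope_def_field]
        rw [← integral_sub (hInt t) (hInt s), ← integral_div]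
      have hmain : Tendsto (fun t => ∫ z in B, (h (w + t • e - z) - h (w + s • e - z)) / (t - s))
          (𝓝[≠] s) (𝓝 (Dfun s)) := by
        apply tendsto_integral_filter_of_dominated_convergence (fun _ : E => L * ‖e‖)
        · exact Eventually.of_forall fun t =>
            (((hcont.comp ((continuous_const).sub continuous_id)).sub
              (hcont.comp ((continuous_const).sub continuous_id))).div_const
              _).aestronglyMeasurable
        · refine eventually_nhdsWithin_of_forall fun t ht => ?_
          have htne : t ≠ s := ht
          refine Eventually.of_forall fun z => ?_
          have h1 : |h (w + t • e - z) - h (w + s • e - z)| ≤ L * (|t - s| * ‖e‖) := by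
            have := hLip (w + t • e - z) (w + s • e - z)
            have heq : ‖(w + t • e - z) - (w + s • e - z)‖ = |t - s| * ‖e‖ := by
              have : (w + t • e - z) - (w + s • e - z) = (t - s) • e := by
                rw [sub_smul]; abel
              rw [this, norm_smul, Real.norm_eq_abs]
            rwa [heq] at this
          rw [Real.norm_eq_abs, abs_div]
          rw [div_le_iff₀ (by rwa [abs_pos, sub_ne_zero])]
          calc |h (w + t • e - z) - h (w + s • e - z)| ≤ L * (|t - s| * ‖e‖) := h1
          _ = L * ‖e‖ * |t - s| := by ring
        · exact integrableOn_const hBfin.ne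
        · filter_upwards [hae s] with z hz
          set q : E := w + s • e - z with hq
          have hc : HasDerivAt (fun t : ℝ => w + t • e - z) e s := by
            have : (fun t : ℝ => w + t • e - z) = fun t : ℝ => (w - z) + t • e := by
              funext t; abel
            rw [this]
            simpa using ((hasDerivAt_id s).smul_const e).const_add (w - z)
          have hφ : HasDerivAt (fun t : ℝ => h (w + t • e - z)) (fderiv ℝ h q e) s :=
            (hz.hasFDerivAt.comp_hasDerivAt s hc)
          have := hasDerivAt_iff_tendsto_slope.mp hφ
          have heq2 : gBar q = fderiv ℝ h q e := by
            rw [hgBar]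
            simp only [hz, if_pos]
            rw [fderiv_apply_eq_inner hz, real_inner_comm]
          rw [heq2]
          refine this.congr' ?_
          refine eventually_nhdsWithin_of_forall fun t ht => ?_
          rw [slope_def_field]
      refine Tendsto.congr' ?_ hmain
      refine eventually_nhdsWithin_of_forall fun t ht => (hslope_eq t ht).symm
    -- bound on Dfun for s in range
    have hDbound : ∀ s : ℝ, 0 ≤ s → s ≤ τ → Dfun s ≤ u * V := by
      intro s hs0 hsτ
      have hball : ∀ z : E, z ∈ B → w + s • e - z ∈ Metric.ball w δ := by
        intro z hz
        rw [Metric.mem_ball, dist_eq_norm]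
        have : w + s • e - z - w = s • e - z := by abel
        rw [this]
        calc ‖s • e - z‖ ≤ ‖s • e‖ + ‖z‖ := norm_sub_le _ _
        _ ≤ s * ‖e‖ + r := by
            apply add_le_add
            · rw [norm_smul, Real.norm_eq_abs, abs_of_nonneg hs0]
            · rwa [← dist_zero_right, ← Metric.mem_closedBall]
        _ ≤ τ * ‖e‖ + r := by
            apply add_le_add_left
            apply mul_le_mul_of_nonneg_right hsτ (norm_nonneg _)
        _ < δ := by linarith
      have hle : ∀ᵐ z ∂(volume.restrict B), gBar (w + s • e - z) ≤ u := by
        filter_upwards [hae s, ae_restrict_mem hBmeas] with z hz hzB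
        rw [hgBar]
        simp only [hz, if_pos]
        exact hgrad _ (hball z hzB) hz
      have hconst : IntegrableOn (fun _ : E => u) B := integrableOn_const hBfin.ne
      calc Dfun s ≤ ∫ _ in B, u := integral_mono_ae (hIntG s) hconst hle
      _ = u * V := by rw [setIntegral_const, smul_eq_mul, mul_comm]; rfl
    -- monotonicity
    have hmono : ψ τ - ψ 0 ≤ u * V * τ := by
      rcases eq_or_lt_of_le hτ with rfl | hτpos
      · simp
      set χ : ℝ → ℝ := fun s => u * V * s - ψ s with hχ
      have hχder : ∀ s : ℝ, HasDerivAt χ (u * V - Dfun s) s := by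
        intro s
        have h1 : HasDerivAt (fun s : ℝ => u * V * s) (u * V) s := by
          simpa using (hasDerivAt_id s).const_mul (u * V)
        exact h1.sub (hDer s)
      have hmOn : MonotoneOn χ (Set.Icc 0 τ) := by
        apply monotoneOn_of_deriv_nonneg (convex_Icc 0 τ)
        · exact Continuous.continuousOn (by
            have : Continuous χ := by
              have : Differentiable ℝ χ := fun s => (hχder s).differentiableAt
              exact this.continuous
            exact this)
        · intro s hs
          exact (hχder s).differentiableAt.differentiableWithinAt
        · intro s hs
          rw [interior_Icc] at hs
          rw [(hχder s).deriv]
          have := hDbound s (le_of_lt hs.1) (le_of_lt hs.2)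
          linarith
      have := hmOn (Set.left_mem_Icc.mpr hτ) (Set.right_mem_Icc.mpr hτ) hτ
      simp only [hχ] at this
      linarith
    -- endpoint comparison
    have hend : ∀ s : ℝ, |ψ s - V * h (w + s • e)| ≤ L * r * V := by
      intro s
      have h1 : ψ s - V * h (w + s • e) = ∫ z in B, (h (w + s • e - z) - h (w + s • e)) := by
        rw [integral_sub (hInt s) (integrableOn_const hBfin.ne)]
        rw [setIntegral_const, smul_eq_mul]; rfl
      rw [← Real.norm_eq_abs, h1]
      apply norm_setIntegral_le_of_norm_le_const hBfin
      · intro z hz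
        rw [Real.norm_eq_abs]
        calc |h (w + s • e - z) - h (w + s • e)| ≤ L * ‖(w + s • e - z) - (w + s • e)‖ :=
          hLip _ _
        _ = L * ‖z‖ := by rw [show (w + s • e - z) - (w + s • e) = -z by abel, norm_neg]
        _ ≤ L * r := by
            apply mul_le_mul_of_nonneg_left _ hL
            rwa [← dist_zero_right, ← Metric.mem_closedBall]
    -- combine
    have h0 : |ψ 0 - V * h w| ≤ L * r * V := by
      have := hend 0
      simpa using this
    have hτe := hend τ
    have hVh : V * (h (w + τ • e) - h w) ≤ u * V * τ + 2 * (L * r * V) := by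
      have e1 : V * h (w + τ • e) ≤ ψ τ + L * r * V := by
        have := abs_le.mp hτe; linarith
      have e2 : ψ 0 ≤ V * h w + L * r * V := by
        have := abs_le.mp h0; linarith
      linarith
    have h5 : u * V * τ + 2 * (L * r * V) = V * (u * τ + 2 * (L * r)) := by ring
    rw [h5] at hVh
    exact le_of_mul_le_mul_left hVh hVpos
  -- conclude, letting r → 0
  refine le_of_forall_pos_le_add fun ε hε => ?_
  set r := min ((δ - τ * ‖e‖) / 2) (ε / (2 * L + 2)) with hr
  have hrpos : 0 < r := by
    apply lt_min
    · linarith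
    · positivity
  have h1 : r + τ * ‖e‖ < δ := by
    have : r ≤ (δ - τ * ‖e‖) / 2 := min_le_left _ _
    linarith
  have h2 := key r hrpos h1
  have h3 : 2 * (L * r) ≤ ε := by
    have hr2 : r ≤ ε / (2 * L + 2) := min_le_right _ _
    have : 2 * L * r ≤ 2 * L * (ε / (2 * L + 2)) := by
      apply mul_le_mul_of_nonneg_left hr2 (by positivity)
    have h4 : 2 * L * (ε / (2 * L + 2)) ≤ ε := by
      rw [mul_div_assoc']
      rw [div_le_iff₀ (by positivity)]
      nlinarith
    linarith
  linarith

lemma prox_mem_clarke (hL : 0 ≤ L) (hLip : ∀ x y : E, |h x - h y| ≤ L * ‖x - y‖)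
    {C : ℝ} (hC : 0 ≤ C) (w p : E)
    (hprox : ∀ v : E, h w + inner ℝ p (v - w) - C * ‖v - w‖ ^ 2 ≤ h v) :
    p ∈ clarkeSubdiff h w := by
  classical
  set S : Set E := {g | ∃ u : ℕ → E,
    (∀ n, DifferentiableAt ℝ h (u n)) ∧ Tendsto u atTop (𝓝 w) ∧
    Tendsto (fun n => gradient h (u n)) atTop (𝓝 g)} with hS
  have hSball : S ⊆ Metric.closedBall (0 : E) L := by
    rintro g ⟨v, hvdiff, hvlim, hglim⟩
    rw [Metric.mem_closedBall, dist_zero_right]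
    have hnorm : Tendsto (fun n => ‖gradient h (v n)‖) atTop (𝓝 ‖g‖) :=
      (continuous_norm.tendsto g).comp hglim
    exact le_of_tendsto hnorm (Eventually.of_forall fun n =>
      norm_gradient_le hL hLip (hvdiff n))
  have hSclosed : IsClosed S := by
    rw [← isSeqClosed_iff_isClosed]
    intro gs g hgs hgslim
    -- diagonal extraction
    have hsel : ∀ k : ℕ, ∃ y : E, DifferentiableAt ℝ h y ∧ dist y w < 1 / (k + 1) ∧
        dist (gradient h y) (gs k) < 1 / (k + 1) := by
      intro k
      obtain ⟨v, hvdiff, hvlim, hglim⟩ := hgs k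
      have hkpos : (0:ℝ) < 1 / ((k:ℝ) + 1) := by positivity
      obtain ⟨N1, h1⟩ := Metric.tendsto_atTop.mp hvlim _ hkpos
      obtain ⟨N2, h2⟩ := Metric.tendsto_atTop.mp hglim _ hkpos
      exact ⟨v (max N1 N2), hvdiff _, h1 _ (le_max_left _ _), h2 _ (le_max_right _ _)⟩
    choose y hydiff hyw hyg using hsel
    refine ⟨y, hydiff, ?_, ?_⟩
    · rw [Metric.tendsto_atTop]
      intro ε hε
      obtain ⟨N, hN⟩ := exists_nat_gt (1 / ε)
      refine ⟨N, fun k hk => ?_⟩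
      calc dist (y k) w < 1 / (k + 1) := hyw k
      _ ≤ ε := by
          rw [div_le_iff₀ (by positivity)]
          rw [div_lt_iff₀ hε] at hN
          have : (N : ℝ) ≤ k := Nat.cast_le.mpr hk
          nlinarith
    · rw [Metric.tendsto_atTop]
      intro ε hε
      have hhalf : (0:ℝ) < ε / 2 := by positivity
      obtain ⟨N1, hN1⟩ := Metric.tendsto_atTop.mp hgslim (ε / 2) hhalf
      obtain ⟨N2, hN2⟩ := exists_nat_gt (2 / ε)
      refine ⟨max N1 N2, fun k hk => ?_⟩
      have hk1 : N1 ≤ k := le_trans (le_max_left _ _) hk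
      have hk2 : N2 ≤ k := le_trans (le_max_right _ _) hk
      calc dist (gradient h (y k)) g ≤ dist (gradient h (y k)) (gs k) + dist (gs k) g :=
        dist_triangle _ _ _
      _ < 1 / (k + 1) + ε / 2 := add_lt_add (hyg k) (hN1 k hk1)
      _ ≤ ε / 2 + ε / 2 := by
          apply add_le_add_left
          have hN2' : (N2 : ℝ) ≤ k := Nat.cast_le.mpr hk2
          have hk3 : 2 / ε < (k:ℝ) + 1 := by linarith
          rw [div_lt_iff₀ hε] at hk3
          have hkpos : (0:ℝ) < (k:ℝ) + 1 := by positivity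
          rw [div_le_iff₀ hkpos]
          nlinarith
      _ = ε := by ring
  have hKcomp : IsCompact (convexHull ℝ S) :=
    isCompact_convexHull_of_isCompact
      ((isCompact_closedBall (0 : E) L).of_isClosed_subset hSclosed hSball)
  by_contra hp
  obtain ⟨f, u, hfu, hup⟩ := geometric_hahn_banach_closed_point
    (convex_convexHull ℝ S) hKcomp.isClosed hp
  obtain ⟨e, he⟩ := (InnerProductSpace.toDual ℝ (EuclideanSpace ℝ (Fin d))).surjective f
  have hfapp : ∀ v : E, f v = (inner ℝ e v : ℝ) := by
    intro v; rw [← he, InnerProductSpace.toDual_apply_apply]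
  -- uniform gradient bound near w
  have hδ : ∃ δ : ℝ, 0 < δ ∧ ∀ y : E, y ∈ Metric.ball w δ → DifferentiableAt ℝ h y →
      (inner ℝ e (gradient h y) : ℝ) ≤ u := by
    by_contra hcon
    push_neg at hcon
    have hsel : ∀ k : ℕ, ∃ y : E, y ∈ Metric.ball w (1 / (k + 1)) ∧
        DifferentiableAt ℝ h y ∧ u < inner ℝ e (gradient h y) := by
      intro k
      obtain ⟨y, hy1, hy2, hy3⟩ := hcon (1 / (k + 1)) (by positivity)
      exact ⟨y, hy1, hy2, hy3⟩
    choose y hymem hydiff hygrad using hsel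
    have hgball : ∀ k, gradient h (y k) ∈ Metric.closedBall (0 : E) L := fun k =>
      Metric.mem_closedBall.mpr (by
        rw [dist_zero_right]; exact norm_gradient_le hL hLip (hydiff k))
    obtain ⟨g, hgmem, φ, hφmono, hφlim⟩ :=
      (isCompact_closedBall (0 : E) L).tendsto_subseq hgball
    have hyw : Tendsto (y ∘ φ) atTop (𝓝 w) := by
      rw [Metric.tendsto_atTop]
      intro ε hε
      obtain ⟨N, hN⟩ := exists_nat_gt (1 / ε)
      refine ⟨N, fun k hk => ?_⟩
      have h1 : dist (y (φ k)) w < 1 / (φ k + 1) := Metric.mem_ball.mp (hymem (φ k))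
      have h2 : (k : ℝ) ≤ φ k := Nat.cast_le.mpr (hφmono.le_apply)
      calc dist (y (φ k)) w < 1 / (φ k + 1) := h1
      _ ≤ ε := by
          rw [div_le_iff₀ (by positivity)]
          rw [div_lt_iff₀ hε] at hN
          have h3 : (N : ℝ) ≤ k := Nat.cast_le.mpr hk
          nlinarith
    have hgS : g ∈ S := ⟨y ∘ φ, fun n => hydiff (φ n), hyw, hφlim⟩
    have h1 : f g < u := hfu g (subset_convexHull ℝ S hgS)
    have h2 : u ≤ f g := by
      rw [hfapp]
      have hcont2 : Tendsto (fun k => (inner ℝ e (gradient h (y (φ k))) : ℝ)) atTop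
          (𝓝 (inner ℝ e g : ℝ)) := ((continuous_const.inner continuous_id).tendsto g).comp hφlim
      exact le_of_tendsto_of_tendsto' tendsto_const_nhds hcont2
        (fun k => le_of_lt (hygrad (φ k)))
    linarith
  obtain ⟨δ, hδpos, hδbound⟩ := hδ
  -- apply segment bound and prox inequality
  have hkey : ∀ τ : ℝ, 0 < τ → τ * ‖e‖ < δ → (inner ℝ p e : ℝ) ≤ u + C * τ * ‖e‖ ^ 2 := by
    intro τ hτpos hτδ
    have hseg := lip_segment_bound hL hLip w e hδpos hδbound (le_of_lt hτpos) hτδ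
    have hpr := hprox (w + τ • e)
    have h1 : (w + τ • e) - w = τ • e := by abel
    rw [h1] at hpr
    have h2 : (inner ℝ p (τ • e) : ℝ) = τ * inner ℝ p e := real_inner_smul_right _ _ _
    have h3 : ‖τ • e‖ ^ 2 = τ ^ 2 * ‖e‖ ^ 2 := by
      rw [norm_smul, mul_pow, Real.norm_eq_abs, sq_abs]
    rw [h2, h3] at hpr
    have h4 : τ * inner ℝ p e - C * (τ ^ 2 * ‖e‖ ^ 2) ≤ u * τ := by linarith
    have h5 : τ * (inner ℝ p e - C * τ * ‖e‖ ^ 2) ≤ τ * u := by nlinarith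
    have h6 := le_of_mul_le_mul_left h5 hτpos
    linarith
  have hfinal : (inner ℝ p e : ℝ) ≤ u := by
    refine le_of_forall_pos_le_add fun ε hε => ?_
    by_cases he0 : e = 0
    · have h0 := hkey 1 one_pos (by simp [he0]; exact hδpos)
      rw [he0] at h0 ⊢
      simp only [inner_zero_right, norm_zero] at h0 ⊢
      nlinarith
    · have hepos : 0 < ‖e‖ := norm_pos_iff.mpr he0
      set τ := min (δ / (2 * ‖e‖)) (ε / (C * ‖e‖ ^ 2 + 1)) with hτdef
      have hτpos : 0 < τ := by
        apply lt_min
        · positivity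
        · positivity
      have hτδ : τ * ‖e‖ < δ := by
        have : τ ≤ δ / (2 * ‖e‖) := min_le_left _ _
        calc τ * ‖e‖ ≤ (δ / (2 * ‖e‖)) * ‖e‖ := by
              apply mul_le_mul_of_nonneg_right this (norm_nonneg _)
        _ = δ / 2 := by field_simp
        _ < δ := by linarith
      have := hkey τ hτpos hτδ
      have h7 : C * τ * ‖e‖ ^ 2 ≤ ε := by
        have h8 : τ ≤ ε / (C * ‖e‖ ^ 2 + 1) := min_le_right _ _
        have h9 : C * ‖e‖ ^ 2 * τ ≤ C * ‖e‖ ^ 2 * (ε / (C * ‖e‖ ^ 2 + 1)) := by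
          apply mul_le_mul_of_nonneg_left h8 (by positivity)
        have h10 : C * ‖e‖ ^ 2 * (ε / (C * ‖e‖ ^ 2 + 1)) ≤ ε := by
          rw [mul_div_assoc']
          rw [div_le_iff₀ (by positivity)]
          nlinarith
        nlinarith
      linarith
  have : u < f p := hup
  rw [hfapp] at this
  rw [real_inner_comm] at hfinal
  linarith

lemma prox_dist_le {c : ℝ} (hc : 0 < c) (hL : 0 ≤ L)
    (hLip : ∀ x y : E, |h x - h y| ≤ L * ‖x - y‖) {c₀ w : E}
    (hmin : ∀ z : E, h w + ‖w - c₀‖ ^ 2 / c ≤ h z + ‖z - c₀‖ ^ 2 / c) :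
    ‖w - c₀‖ ≤ c * L / 2 := by
  set t := ‖w - c₀‖ with ht
  rcases eq_or_lt_of_le (norm_nonneg (w - c₀)) with h0 | htpos
  · have ht0 : t = 0 := h0.symm
    rw [ht0]; positivity
  have key : 2 * t ≤ c * L := by
    refine le_of_forall_pos_le_add fun ε hε => ?_
    set s := min t ε with hs
    have hspos : 0 < s := lt_min htpos hε
    have hst : s ≤ t := min_le_left _ _
    set z : E := w + (s / t) • (c₀ - w) with hz
    have hzw : ‖z - w‖ = s := by
      rw [hz]
      have : w + (s / t) • (c₀ - w) - w = (s / t) • (c₀ - w) := by abel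
      rw [this, norm_smul, Real.norm_eq_abs, abs_of_nonneg (by positivity)]
      have : ‖c₀ - w‖ = t := by rw [ht, norm_sub_rev]
      rw [this, div_mul_cancel₀]
      exact ne_of_gt htpos
    have hzc : ‖z - c₀‖ = t - s := by
      have heq : z - c₀ = (1 - s / t) • (w - c₀) := by
        rw [hz, sub_smul, one_smul, smul_sub]
        module
      rw [heq, norm_smul, Real.norm_eq_abs, abs_of_nonneg]
      · rw [← ht]
        field_simp
        rw [mul_sub, mul_one, mul_div_assoc', mul_div_cancel_left₀ (a := t) s (ne_of_gt htpos)]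
      · have : s / t ≤ 1 := by rw [div_le_one htpos]; exact hst
        linarith
    have hhz : h z ≤ h w + L * s := by
      have := (abs_le.mp (hLip z w)).2
      rw [hzw] at this; linarith
    have hm := hmin z
    rw [hzc] at hm
    have hineq : t ^ 2 - (t - s) ^ 2 ≤ c * (L * s) := by
      have h2 : t ^ 2 / c ≤ h z - h w + (t - s) ^ 2 / c := by linarith
      have h3 : h z - h w ≤ L * s := by linarith
      have h4 : t ^ 2 / c - (t - s) ^ 2 / c ≤ L * s := by linarith
      calc t ^ 2 - (t - s) ^ 2 = c * (t ^ 2 / c - (t - s) ^ 2 / c) := by field_simp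
      _ ≤ c * (L * s) := by apply mul_le_mul_of_nonneg_left h4 (le_of_lt hc)
    have h5 : s * (2 * t - s) ≤ s * (c * L) := by nlinarith
    have h6 := le_of_mul_le_mul_left (by linarith [h5] : s * (2 * t - s) ≤ s * (c * L)) hspos
    have h7 : s ≤ ε := min_le_right _ _
    linarith
  linarith

lemma prox_subgrad {c : ℝ} (hc : 0 < c) {c₀ w : E}
    (hmin : ∀ z : E, h w + ‖w - c₀‖ ^ 2 / c ≤ h z + ‖z - c₀‖ ^ 2 / c) :
    ∀ v : E, h w + (inner ℝ ((2 / c) • (c₀ - w)) (v - w) : ℝ) - (1 / c) * ‖v - w‖ ^ 2 ≤ h v := by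
  intro v
  have hm := hmin v
  have hexp : ‖v - c₀‖ ^ 2 = ‖v - w‖ ^ 2 + 2 * (inner ℝ (v - w) (w - c₀) : ℝ) + ‖w - c₀‖ ^ 2 := by
    have : v - c₀ = (v - w) + (w - c₀) := by abel
    rw [this, norm_add_sq_real]
    try ring
  rw [hexp] at hm
  have hinner : (inner ℝ ((2 / c) • (c₀ - w)) (v - w) : ℝ)
      = (2 / c) * (inner ℝ (c₀ - w) (v - w) : ℝ) := real_inner_smul_left _ _ _
  have hsym : (inner ℝ (c₀ - w) (v - w) : ℝ) = -(inner ℝ (v - w) (w - c₀) : ℝ) := by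
    rw [real_inner_comm, show (w - c₀ : EuclideanSpace ℝ (Fin d)) = -(c₀ - w) by abel,
      inner_neg_right, neg_neg]
  rw [hinner, hsym]
  have hc' : c ≠ 0 := ne_of_gt hc
  have expand : h w + 2 / c * -(inner ℝ (v - w) (w - c₀) : ℝ) - 1 / c * ‖v - w‖ ^ 2
      = h w + ‖w - c₀‖ ^ 2 / c
        - (‖v - w‖ ^ 2 + 2 * (inner ℝ (v - w) (w - c₀) : ℝ) + ‖w - c₀‖ ^ 2) / c := by
    field_simp
    ring
  rw [expand]
  linarith

lemma danskin (hlam : 0 < lam) (hL0 : 0 ≤ L)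
    (hLip : ∀ x y : E, |h x - h y| ≤ L * ‖x - y‖) (hcont : Continuous h) (zs G : E)
    (hmaster : ∀ y : E, moreauEnv (2*lam) h y ≤ moreauEnv (2*lam) h zs
      + (inner ℝ G (y - zs) : ℝ) + ‖y - zs‖ ^ 2 / (2*lam)) :
    G ∈ convexHull ℝ ((fun w => (2*lam)⁻¹ • (zs - w)) ''
      {w : E | ∀ z : E, h w + ‖w - zs‖ ^ 2 / (2*(2*lam)) ≤ h z + ‖z - zs‖ ^ 2 / (2*(2*lam))}) := by
  classical
  have h2lam : 0 < 2 * lam := by linarith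
  have h4lam : 0 < 2 * (2 * lam) := by linarith
  have hcoer_h : ∀ y₀ z : E, h y₀ - L * ‖z - y₀‖ ≤ h z := by
    intro y₀ z
    have := (abs_le.mp (hLip y₀ z)).2
    rw [← norm_neg (y₀ - z), neg_sub] at this
    linarith
  have hminex : ∀ c₀ : E, ∃ w : E, ∀ z : E,
      h w + ‖w - c₀‖ ^ 2 / (2*(2*lam)) ≤ h z + ‖z - c₀‖ ^ 2 / (2*(2*lam)) :=
    fun c₀ => exists_forall_min _ h4lam hL0 h hcont hcoer_h c₀
  set W : Set E := {w : E | ∀ z : E,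
    h w + ‖w - zs‖ ^ 2 / (2*(2*lam)) ≤ h z + ‖z - zs‖ ^ 2 / (2*(2*lam))} with hWdef
  set P : Set E := (fun w => (2*lam)⁻¹ • (zs - w)) '' W with hPdef
  -- W compact
  have hWclosed : IsClosed W := by
    have heq : W = ⋂ z : E, {w : E |
        h w + ‖w - zs‖ ^ 2 / (2*(2*lam)) ≤ h z + ‖z - zs‖ ^ 2 / (2*(2*lam))} := by
      ext w; simp [hWdef, Set.mem_iInter, Set.mem_setOf_eq]
    rw [heq]
    refine isClosed_iInter fun z => isClosed_le ?_ continuous_const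
    exact hcont.add (((continuous_id.sub continuous_const).norm.pow 2).div_const _)
  have hWsub : W ⊆ Metric.closedBall zs (2 * lam * L) := by
    intro w hw
    rw [Metric.mem_closedBall, dist_eq_norm]
    have := prox_dist_le h4lam hL0 hLip hw
    calc ‖w - zs‖ ≤ (2*(2*lam)) * L / 2 := this
    _ = 2 * lam * L := by ring
  have hWcp : IsCompact W := (isCompact_closedBall _ _).of_isClosed_subset hWclosed hWsub
  have hPcp : IsCompact P :=
    hWcp.image (by fun_prop : Continuous fun w : E => (2*lam)⁻¹ • (zs - w))
  by_contra hGp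
  obtain ⟨f, u, hfu, huG⟩ := geometric_hahn_banach_closed_point
    (convex_convexHull ℝ P) (isCompact_convexHull_of_isCompact hPcp).isClosed hGp
  obtain ⟨e, he⟩ := (InnerProductSpace.toDual ℝ (EuclideanSpace ℝ (Fin d))).surjective f
  have hfapp : ∀ v : E, f v = (inner ℝ e v : ℝ) := by
    intro v; rw [← he, InnerProductSpace.toDual_apply_apply]
  set tseq : ℕ → ℝ := fun n => 1 / ((n:ℝ) + 1) with htseq
  set cseq : ℕ → E := fun n => zs - tseq n • e with hcseq
  have htpos : ∀ n, 0 < tseq n := fun n => by positivity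
  have htlim : Tendsto tseq atTop (𝓝 0) := tendsto_one_div_add_atTop_nhds_zero_nat
  have hclim : Tendsto cseq atTop (𝓝 zs) := by
    have h1 : Tendsto (fun n => tseq n • e) atTop (𝓝 ((0:ℝ) • e)) := htlim.smul_const e
    rw [zero_smul] at h1
    simpa using tendsto_const_nhds.sub h1
  have hsel : ∀ n : ℕ, ∃ w : E, ∀ z : E,
      h w + ‖w - cseq n‖ ^ 2 / (2*(2*lam)) ≤ h z + ‖z - cseq n‖ ^ 2 / (2*(2*lam)) :=
    fun n => hminex (cseq n)
  choose wseq hwseq using hsel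
  have hwdist : ∀ n, ‖wseq n - cseq n‖ ≤ 2 * lam * L := by
    intro n
    have := prox_dist_le h4lam hL0 hLip (hwseq n)
    calc ‖wseq n - cseq n‖ ≤ (2*(2*lam)) * L / 2 := this
    _ = 2 * lam * L := by ring
  have hwball : ∀ n, wseq n ∈ Metric.closedBall zs (2 * lam * L + ‖e‖) := by
    intro n
    rw [Metric.mem_closedBall, dist_eq_norm]
    have h1 : ‖wseq n - zs‖ ≤ ‖wseq n - cseq n‖ + ‖cseq n - zs‖ := by
      have : wseq n - zs = (wseq n - cseq n) + (cseq n - zs) := by abel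
      rw [this]; exact norm_add_le _ _
    have h2 : ‖cseq n - zs‖ = tseq n * ‖e‖ := by
      have : cseq n - zs = -(tseq n • e) := by rw [hcseq]; beta_reduce; abel
      rw [this, norm_neg, norm_smul, Real.norm_eq_abs, abs_of_pos (htpos n)]
    have h3 : tseq n ≤ 1 := by
      rw [htseq]
      rw [div_le_one (by positivity)]
      simp
    have h4 : tseq n * ‖e‖ ≤ ‖e‖ := by
      calc tseq n * ‖e‖ ≤ 1 * ‖e‖ := mul_le_mul_of_nonneg_right h3 (norm_nonneg _)
      _ = ‖e‖ := one_mul _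
    linarith [hwdist n]
  obtain ⟨w₀, hw₀mem, φ, hφmono, hφlim⟩ :=
    (isCompact_closedBall zs (2 * lam * L + ‖e‖)).tendsto_subseq hwball
  have hφat : Tendsto φ atTop atTop := hφmono.tendsto_atTop
  have hclimφ : Tendsto (fun n => cseq (φ n)) atTop (𝓝 zs) := hclim.comp hφat
  have htlimφ : Tendsto (fun n => tseq (φ n)) atTop (𝓝 0) := htlim.comp hφat
  have hw₀W : w₀ ∈ W := by
    rw [hWdef, Set.mem_setOf_eq]
    intro z
    have hlim1 : Tendsto (fun n => h (wseq (φ n)) + ‖wseq (φ n) - cseq (φ n)‖ ^ 2 / (2*(2*lam)))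
        atTop (𝓝 (h w₀ + ‖w₀ - zs‖ ^ 2 / (2*(2*lam)))) := by
      apply Tendsto.add
      · exact (hcont.tendsto w₀).comp hφlim
      · exact (((hφlim.sub hclimφ).norm.pow 2).div_const _)
    have hlim2 : Tendsto (fun n => h z + ‖z - cseq (φ n)‖ ^ 2 / (2*(2*lam)))
        atTop (𝓝 (h z + ‖z - zs‖ ^ 2 / (2*(2*lam)))) := by
      apply Tendsto.add tendsto_const_nhds
      exact (((tendsto_const_nhds.sub hclimφ).norm.pow 2).div_const _)
    exact le_of_tendsto_of_tendsto hlim1 hlim2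
      (Eventually.of_forall fun n => hwseq (φ n) z)
  have hscal : ∀ n, 2 * (inner ℝ (wseq n - zs) e : ℝ)
      ≤ -(2*(2*lam)) * (inner ℝ G e : ℝ) + tseq n * ‖e‖ ^ 2 := by
    intro n
    have hA : moreauEnv (2*lam) h (cseq n)
        = h (wseq n) + ‖wseq n - cseq n‖ ^ 2 / (2*(2*lam)) :=
      le_antisymm (moreau_le h2lam hL0 hLip _ _) (le_moreau _ (hwseq n))
    have hB : moreauEnv (2*lam) h zs ≤ h (wseq n) + ‖wseq n - zs‖ ^ 2 / (2*(2*lam)) :=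
      moreau_le h2lam hL0 hLip _ _
    have hC := hmaster (cseq n)
    have hd1 : cseq n - zs = -(tseq n • e) := by rw [hcseq]; beta_reduce; abel
    have hcn : ‖cseq n - zs‖ ^ 2 = (tseq n) ^ 2 * ‖e‖ ^ 2 := by
      rw [hd1, norm_neg, norm_smul, mul_pow, Real.norm_eq_abs, sq_abs]
    have hGcn : (inner ℝ G (cseq n - zs) : ℝ) = -(tseq n * (inner ℝ G e : ℝ)) := by
      rw [hd1, inner_neg_right, real_inner_smul_right]
    have hwc : ‖wseq n - cseq n‖ ^ 2 = ‖wseq n - zs‖ ^ 2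
        + 2 * (tseq n) * (inner ℝ (wseq n - zs) e : ℝ) + (tseq n) ^ 2 * ‖e‖ ^ 2 := by
      have heq2 : wseq n - cseq n = (wseq n - zs) + tseq n • e := by rw [hcseq]; beta_reduce; abel
      rw [heq2, norm_add_sq_real, real_inner_smul_right]
      have : ‖tseq n • e‖ ^ 2 = (tseq n) ^ 2 * ‖e‖ ^ 2 := by
        rw [norm_smul, mul_pow, Real.norm_eq_abs, sq_abs]
      rw [this]; ring
    rw [hA] at hC
    rw [hcn, hGcn] at hC
    -- hC : h (wseq n) + ‖wseq n - cseq n‖^2/(4λ) ≤ env2 zs - t⟪G,e⟫ + t²‖e‖²/(2λ)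
    have hcomb : h (wseq n) + ‖wseq n - cseq n‖ ^ 2 / (2*(2*lam))
        ≤ h (wseq n) + ‖wseq n - zs‖ ^ 2 / (2*(2*lam))
          - tseq n * (inner ℝ G e : ℝ) + (tseq n) ^ 2 * ‖e‖ ^ 2 / (2*lam) := by linarith
    rw [hwc] at hcomb
    have ht := htpos n
    have hstep : tseq n * (2 * (inner ℝ (wseq n - zs) e : ℝ))
        ≤ tseq n * (-(2*(2*lam)) * (inner ℝ G e : ℝ) + tseq n * ‖e‖ ^ 2) := by
      have hexpand : (‖wseq n - zs‖ ^ 2 + 2 * (tseq n) * (inner ℝ (wseq n - zs) e : ℝ)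
          + (tseq n) ^ 2 * ‖e‖ ^ 2) / (2*(2*lam))
          - ‖wseq n - zs‖ ^ 2 / (2*(2*lam))
          = (2 * (tseq n) * (inner ℝ (wseq n - zs) e : ℝ) + (tseq n) ^ 2 * ‖e‖ ^ 2)
            / (2*(2*lam)) := by ring
      have h6 : (2 * (tseq n) * (inner ℝ (wseq n - zs) e : ℝ) + (tseq n) ^ 2 * ‖e‖ ^ 2)
          / (2*(2*lam)) ≤ - tseq n * (inner ℝ G e : ℝ) + (tseq n) ^ 2 * ‖e‖ ^ 2 / (2*lam) := by
        linarith
      have h7 : 2 * (tseq n) * (inner ℝ (wseq n - zs) e : ℝ) + (tseq n) ^ 2 * ‖e‖ ^ 2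
          ≤ (2*(2*lam)) * (- tseq n * (inner ℝ G e : ℝ) + (tseq n) ^ 2 * ‖e‖ ^ 2 / (2*lam)) := by
        rw [← div_le_iff₀' h4lam] 
        exact h6
      have hdiv : (2*(2*lam)) * ((tseq n) ^ 2 * ‖e‖ ^ 2 / (2*lam)) = 2 * ((tseq n) ^ 2 * ‖e‖ ^ 2) := by
        field_simp
      rw [mul_add, hdiv] at h7
      ring_nf
      ring_nf at h7
      linarith
    exact le_of_mul_le_mul_left hstep ht
  have hlim3 : Tendsto (fun n => 2 * (inner ℝ (wseq (φ n) - zs) e : ℝ)) atTop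
      (𝓝 (2 * (inner ℝ (w₀ - zs) e : ℝ))) := by
    apply Tendsto.const_mul
    exact ((hφlim.sub tendsto_const_nhds).inner tendsto_const_nhds)
  have hlim4 : Tendsto (fun n => -(2*(2*lam)) * (inner ℝ G e : ℝ) + tseq (φ n) * ‖e‖ ^ 2) atTop
      (𝓝 (-(2*(2*lam)) * (inner ℝ G e : ℝ) + 0 * ‖e‖ ^ 2)) := by
    exact tendsto_const_nhds.add (htlimφ.mul_const _)
  have hfinal : 2 * (inner ℝ (w₀ - zs) e : ℝ) ≤ -(2*(2*lam)) * (inner ℝ G e : ℝ) := by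
    have := le_of_tendsto_of_tendsto hlim3 hlim4
      (Eventually.of_forall fun n => hscal (φ n))
    simpa using this
  have hp₀ : (2*lam)⁻¹ • (zs - w₀) ∈ P := ⟨w₀, hw₀W, rfl⟩
  have h1 : f ((2*lam)⁻¹ • (zs - w₀)) < u := hfu _ (subset_convexHull ℝ P hp₀)
  have h2 : u < f G := huG
  have h3 : f G ≤ f ((2*lam)⁻¹ • (zs - w₀)) := by
    rw [hfapp, hfapp]
    have hr1 : (inner ℝ e ((2*lam)⁻¹ • (zs - w₀)) : ℝ) = (2*lam)⁻¹ * (inner ℝ e (zs - w₀) : ℝ) :=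
      real_inner_smul_right _ _ _
    have hr2 : (inner ℝ e (zs - w₀) : ℝ) = -(inner ℝ (w₀ - zs) e : ℝ) := by
      rw [real_inner_comm, show (zs - w₀ : EuclideanSpace ℝ (Fin d)) = -(w₀ - zs) by abel,
        inner_neg_left]
    have hr3 : (inner ℝ e G : ℝ) = (inner ℝ G e : ℝ) := real_inner_comm _ _
    rw [hr1, hr2, hr3]
    have h4 : (2*lam) * (inner ℝ G e : ℝ) ≤ -(inner ℝ (w₀ - zs) e : ℝ) := by linarith
    have h5 := mul_le_mul_of_nonneg_left h4 (le_of_lt (inv_pos.mpr h2lam))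
    rw [← mul_assoc, inv_mul_cancel₀ (ne_of_gt h2lam), one_mul] at h5
    exact h5
  linarith


end auxiliary

/-- A `β`-stationary point of the Lasry-Lions regularization `h̃_λ` of an `L`-Lipschitz function
is a `(3λL, β)`-Goldstein stationary point of `h`. -/
theorem lasryLions_stationary (d : ℕ) (L lam β : ℝ) (hlam : 0 < lam)
    (h : EuclideanSpace ℝ (Fin d) → ℝ)
    (hLip : ∀ x y : EuclideanSpace ℝ (Fin d), |h x - h y| ≤ L * ‖x - y‖)
    (x : EuclideanSpace ℝ (Fin d))
    (hdiff : DifferentiableAt ℝ (lasryLions lam h) x)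
    (hgrad : ‖gradient (lasryLions lam h) x‖ ≤ β) (hβL : β ≤ L) :
    ∃ g ∈ goldsteinSubdiff h (3 * lam * L) x, ‖g‖ ≤ β := by
  classical
  have hβ0 : 0 ≤ β := le_trans (norm_nonneg _) hgrad
  have hL0 : 0 ≤ L := le_trans hβ0 hβL
  have h2lam : 0 < 2 * lam := by linarith
  have h4lam : 0 < 2 * (2 * lam) := by linarith
  have hcont : Continuous h := (lipW hL0 hLip).continuous
  have henvlip : ∀ y y' : EuclideanSpace ℝ (Fin d),
      moreauEnv (2*lam) h y ≤ moreauEnv (2*lam) h y' + L * ‖y - y'‖ :=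
    fun y y' => moreau_lip h2lam hL0 hLip y y'
  have henvcont : Continuous (moreauEnv (2*lam) h) :=
    (moreau_lipschitz h2lam hL0 hLip).continuous
  have hLipf : ∀ a b : EuclideanSpace ℝ (Fin d),
      |(fun y => -(moreauEnv (2*lam) h y)) a - (fun y => -(moreauEnv (2*lam) h y)) b|
        ≤ L * ‖a - b‖ := by
    intro a b
    simp only []
    have heq : -(moreauEnv (2*lam) h a) - -(moreauEnv (2*lam) h b)
        = moreauEnv (2*lam) h b - moreauEnv (2*lam) h a := by ring
    rw [heq, abs_sub_le_iff]
    constructor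
    · have := henvlip b a
      rw [norm_sub_rev] at this
      linarith
    · have := henvlip a b
      linarith
  obtain ⟨zs, hzs⟩ := exists_forall_min (2*lam) h2lam hL0
    (fun y => -(moreauEnv (2*lam) h y)) henvcont.neg
    (fun y₀ z => by
      have := henvlip z y₀
      linarith) x
  have hmoreq : moreauEnv lam (fun y => -(moreauEnv (2*lam) h y)) x
      = -(moreauEnv (2*lam) h zs) + ‖zs - x‖ ^ 2 / (2*lam) :=
    le_antisymm (moreau_le hlam hL0 hLipf x zs) (le_moreau x hzs)
  have hLLge : ∀ v : EuclideanSpace ℝ (Fin d),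
      moreauEnv (2*lam) h zs - ‖zs - v‖ ^ 2 / (2*lam) ≤ lasryLions lam h v := by
    intro v
    have h1 := moreau_le hlam hL0 hLipf v zs
    rw [lasryLions]
    linarith
  have hLLx : lasryLions lam h x = moreauEnv (2*lam) h zs - ‖zs - x‖ ^ 2 / (2*lam) := by
    rw [lasryLions, hmoreq]; ring
  set G := gradient (lasryLions lam h) x with hGdef
  have hGeq : G = lam⁻¹ • (zs - x) := by
    rw [hGdef]
    apply gradient_eq_of_quad_subgrad (c := 1/(2*lam)) hdiff
    intro v
    have h2 := hLLge v
    have hexp : ‖zs - v‖ ^ 2 = ‖zs - x‖ ^ 2 - 2 * (inner ℝ (zs-x) (v-x) : ℝ) + ‖v - x‖ ^ 2 := by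
      have hq : zs - v = (zs - x) - (v - x) := by abel
      rw [hq, norm_sub_sq_real]
    have hsm : (inner ℝ (lam⁻¹ • (zs-x)) (v-x) : ℝ) = lam⁻¹ * (inner ℝ (zs-x) (v-x) : ℝ) :=
      real_inner_smul_left _ _ _
    rw [hLLx, hsm]
    have heq3 : moreauEnv (2*lam) h zs - ‖zs-x‖ ^ 2 / (2*lam)
          + lam⁻¹ * (inner ℝ (zs-x) (v-x) : ℝ) - 1/(2*lam) * ‖v-x‖ ^ 2
        = moreauEnv (2*lam) h zs - ‖zs-v‖ ^ 2 / (2*lam) := by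
      rw [hexp]; field_simp; ring
    rw [heq3]
    exact h2
  have hzsG : zs - x = lam • G := by
    rw [hGeq, smul_smul, mul_inv_cancel₀ (ne_of_gt hlam), one_smul]
  have hnorm_zsx : ‖zs - x‖ ≤ lam * β := by
    rw [hzsG, norm_smul, Real.norm_eq_abs, abs_of_pos hlam]
    exact mul_le_mul_of_nonneg_left hgrad (le_of_lt hlam)
  have hmaster : ∀ y : EuclideanSpace ℝ (Fin d), moreauEnv (2*lam) h y
      ≤ moreauEnv (2*lam) h zs + (inner ℝ G (y - zs) : ℝ) + ‖y - zs‖ ^ 2 / (2*lam) := by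
    intro y
    have h4 := hzs y
    have hexp : ‖y - x‖ ^ 2 = ‖y - zs‖ ^ 2 + 2 * (lam * (inner ℝ (y-zs) G : ℝ)) + ‖zs - x‖ ^ 2 := by
      have h5 : y - x = (y - zs) + (zs - x) := by abel
      rw [h5, norm_add_sq_real]
      have h6 : (inner ℝ (y-zs) (zs-x) : ℝ) = lam * (inner ℝ (y-zs) G : ℝ) := by
        rw [hzsG, real_inner_smul_right]
      rw [h6]
    have hcm : (inner ℝ (y - zs) G : ℝ) = (inner ℝ G (y - zs) : ℝ) := real_inner_comm _ _
    have hsplit : (‖y-x‖ ^ 2 - ‖zs-x‖ ^ 2)/(2*lam) = ‖y-x‖ ^ 2/(2*lam) - ‖zs-x‖ ^ 2/(2*lam) := by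
      ring
    have h7 : moreauEnv (2*lam) h y
        ≤ moreauEnv (2*lam) h zs + (‖y-x‖ ^ 2 - ‖zs-x‖ ^ 2)/(2*lam) := by
      rw [hsplit]; linarith
    rw [hexp] at h7
    have h8 : (‖y-zs‖ ^ 2 + 2*(lam * (inner ℝ (y-zs) G : ℝ)) + ‖zs-x‖ ^ 2 - ‖zs-x‖ ^ 2)/(2*lam)
        = (inner ℝ (y-zs) G : ℝ) + ‖y-zs‖ ^ 2/(2*lam) := by
      field_simp
      ring
    rw [h8] at h7
    rw [← hcm]
    linarith
  have hGP := danskin hlam hL0 hLip hcont zs G hmaster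
  refine ⟨G, ?_, hgrad⟩
  have hPsub : ((fun w => (2*lam)⁻¹ • (zs - w)) ''
      {w : EuclideanSpace ℝ (Fin d) | ∀ z : EuclideanSpace ℝ (Fin d),
        h w + ‖w - zs‖ ^ 2 / (2*(2*lam)) ≤ h z + ‖z - zs‖ ^ 2 / (2*(2*lam))})
      ⊆ ⋃ y ∈ Metric.closedBall x (3*lam*L), clarkeSubdiff h y := by
    rintro p ⟨w, hwW, rfl⟩
    have hwdist : ‖w - zs‖ ≤ 2*lam*L := by
      have h11 := prox_dist_le h4lam hL0 hLip hwW
      have heq : (2*(2*lam))*L/2 = 2*lam*L := by ring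
      linarith
    have hwball : w ∈ Metric.closedBall x (3*lam*L) := by
      rw [Metric.mem_closedBall, dist_eq_norm]
      have h9 : ‖w - x‖ ≤ ‖w - zs‖ + ‖zs - x‖ := by
        have hq : w - x = (w - zs) + (zs - x) := by abel
        rw [hq]; exact norm_add_le _ _
      have h10 : lam * β ≤ lam * L := mul_le_mul_of_nonneg_left hβL (le_of_lt hlam)
      have : ‖w - x‖ ≤ 2*lam*L + lam*β := by linarith
      nlinarith
    refine Set.mem_biUnion hwball ?_
    have hpx := prox_subgrad h4lam hwW
    have heqp : (2/(2*(2*lam))) • (zs - w) = (2*lam)⁻¹ • (zs - w) := by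
      congr 1
      field_simp
    apply prox_mem_clarke hL0 hLip (C := 1/(2*(2*lam))) (by positivity) w
    intro v
    have h12 := hpx v
    rw [heqp] at h12
    exact h12
  show G ∈ goldsteinSubdiff h (3 * lam * L) x
  rw [goldsteinSubdiff]
  exact convexHull_mono hPsub hGP
end
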